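/- arXiv:1409.4659 — 3 statements merged into one kernel-verified Lean document; each statement's English description precedes it below -/
import Mathlib

section
/- If a totally bounded set F ⊆ X is equi-homogeneous, F attains both its upper and lower box-counting dimensions, and dim_LB F = dim_B F, then dim_A F = dim_B F = dim_LB F = dim_LA F. -/
open Set Metric Filter Bornology MeasureTheory
open scoped ENNReal NNReal

/-- `coverNumber F δ` : the minimum number of closed `δ`-balls with centres in
`F` needed to cover `F` (`∞` if there is no finite such cover). -/
noncomputable def coverNumber {X : Type*} [MetricSpace X] (F : Set X) (δ : ℝ) : ℝ≥0∞ :=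
  ⨅ (t : Finset X) (_ : (t : Set X) ⊆ F) (_ : F ⊆ ⋃ x ∈ t, closedBall x δ),
    (t.card : ℝ≥0∞)

/-- `F` is equi-homogeneous: for every `δ₀ > 0` there are `M ≥ 1` and
`c₁, c₂ > 0` with
`sup_{x∈F} N(B_δ(x) ∩ F, ρ) ≤ M inf_{x∈F} N(B_{c₁δ}(x) ∩ F, c₂ρ)`
for all `0 < ρ < δ ≤ δ₀`. -/
def EquiHomogeneous {X : Type*} [MetricSpace X] (F : Set X) : Prop :=
  ∀ δ₀ : ℝ, 0 < δ₀ → ∃ M c₁ c₂ : ℝ, 1 ≤ M ∧ 0 < c₁ ∧ 0 < c₂ ∧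
    ∀ δ ρ : ℝ, 0 < ρ → ρ < δ → δ ≤ δ₀ →
      (⨆ x ∈ F, coverNumber (closedBall x δ ∩ F) ρ) ≤
        ENNReal.ofReal M * (⨅ x ∈ F, coverNumber (closedBall x (c₁ * δ) ∩ F) (c₂ * ρ))

/-- The Assouad dimension of `F`. -/
noncomputable def assouadDim {X : Type*} [MetricSpace X] (F : Set X) : ℝ :=
  sInf {s : ℝ | 0 ≤ s ∧ ∀ δ₀ : ℝ, 0 < δ₀ → ∃ C : ℝ, 0 < C ∧
    ∀ x ∈ F, ∀ δ ρ : ℝ, 0 < ρ → ρ < δ → δ ≤ δ₀ →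
      coverNumber (closedBall x δ ∩ F) ρ ≤ ENNReal.ofReal (C * (δ / ρ) ^ s)}

/-- The lower Assouad dimension of `F`. -/
noncomputable def lowerAssouadDim {X : Type*} [MetricSpace X] (F : Set X) : ℝ :=
  sSup {s : ℝ | 0 ≤ s ∧ ∀ δ₀ : ℝ, 0 < δ₀ → ∃ C : ℝ, 0 < C ∧
    ∀ x ∈ F, ∀ δ ρ : ℝ, 0 < ρ → ρ < δ → δ ≤ δ₀ →
      ENNReal.ofReal (C * (δ / ρ) ^ s) ≤ coverNumber (closedBall x δ ∩ F) ρ}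

/-- The upper box-counting dimension of `F`. -/
noncomputable def upperBoxDim {X : Type*} [MetricSpace X] (F : Set X) : ℝ :=
  Filter.limsup (fun δ : ℝ => Real.log (coverNumber F δ).toReal / -Real.log δ)
    (nhdsWithin 0 (Set.Ioi 0))

/-- The lower box-counting dimension of `F`. -/
noncomputable def lowerBoxDim {X : Type*} [MetricSpace X] (F : Set X) : ℝ :=
  Filter.liminf (fun δ : ℝ => Real.log (coverNumber F δ).toReal / -Real.log δ)
    (nhdsWithin 0 (Set.Ioi 0))
section Basic
variable {X : Type*} [MetricSpace X]

lemma coverNumber_le_card {F : Set X} {δ : ℝ} {t : Finset X} (h1 : (t : Set X) ⊆ F)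
    (h2 : F ⊆ ⋃ x ∈ t, closedBall x δ) : coverNumber F δ ≤ t.card :=
  iInf_le_of_le t <| iInf_le_of_le h1 <| iInf_le_of_le h2 le_rfl

lemma coverNumber_anti {F : Set X} {δ₁ δ₂ : ℝ} (h : δ₁ ≤ δ₂) :
    coverNumber F δ₂ ≤ coverNumber F δ₁ := by
  refine le_iInf fun t => le_iInf fun ht => le_iInf fun hc => coverNumber_le_card ht (hc.trans ?_)
  exact Set.iUnion₂_mono fun x _ => closedBall_subset_closedBall h

lemma coverNumber_empty (δ : ℝ) : coverNumber (∅ : Set X) δ = 0 := by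
  refine le_antisymm ?_ (zero_le)
  have := coverNumber_le_card (F := (∅ : Set X)) (δ := δ) (t := (∅ : Finset X))
    (by simp) (by simp)
  simpa using this

lemma one_le_coverNumber {F : Set X} (hF : F.Nonempty) (δ : ℝ) : 1 ≤ coverNumber F δ := by
  refine le_iInf fun t => le_iInf fun ht => le_iInf fun hc => ?_
  obtain ⟨x, hx⟩ := hF
  have := hc hx
  simp only [Set.mem_iUnion] at this
  obtain ⟨y, hy, -⟩ := this
  have : 0 < t.card := Finset.card_pos.2 ⟨y, hy⟩
  exact_mod_cast Nat.one_le_cast.2 this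

/-- attainment of the infimum -/
lemma coverNumber_attained {F : Set X} {δ : ℝ} (h : coverNumber F δ ≠ ⊤) :
    ∃ t : Finset X, (t : Set X) ⊆ F ∧ (F ⊆ ⋃ x ∈ t, closedBall x δ) ∧
      (t.card : ℝ≥0∞) = coverNumber F δ := by
  classical
  have hne : ∃ t : Finset X, (t : Set X) ⊆ F ∧ F ⊆ ⋃ x ∈ t, closedBall x δ := by
    by_contra hcon
    push_neg at hcon
    apply h
    rw [coverNumber]
    rw [iInf_eq_top]
    intro t
    rw [iInf_eq_top]
    intro ht
    rw [iInf_eq_top]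
    intro hc
    exact absurd hc (hcon t ht)
  set A : Set ℕ := {n | ∃ t : Finset X, ((t : Set X) ⊆ F ∧ F ⊆ ⋃ x ∈ t, closedBall x δ) ∧ t.card = n} with hA
  have hAne : A.Nonempty := by
    obtain ⟨t, h1, h2⟩ := hne
    exact ⟨t.card, t, ⟨h1, h2⟩, rfl⟩
  obtain ⟨t, ⟨h1, h2⟩, hcard⟩ := Nat.sInf_mem hAne
  refine ⟨t, h1, h2, le_antisymm ?_ (coverNumber_le_card h1 h2)⟩
  refine le_iInf fun s => le_iInf fun hs => le_iInf fun hcs => ?_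
  have : sInf A ≤ s.card := Nat.sInf_le ⟨s, ⟨hs, hcs⟩, rfl⟩
  rw [hcard]
  exact_mod_cast this

/-- recentering : a cover with arbitrary centres of radius r yields a cover with
centres in `A` of radius `2r`. -/
lemma coverNumber_le_of_cover {A : Set X} {r : ℝ} (t : Finset X)
    (hc : A ⊆ ⋃ x ∈ t, closedBall x r) : coverNumber A (2 * r) ≤ t.card := by
  classical
  have hch : ∀ x : X, (closedBall x r ∩ A).Nonempty → (closedBall x r ∩ A).Nonempty := fun _ h => h
  set f : X → X := fun x => if h : (closedBall x r ∩ A).Nonempty then h.choose else x with hf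
  set t' : Finset X := (t.filter (fun x => (closedBall x r ∩ A).Nonempty)).image f with ht'
  have hft : ∀ x, (closedBall x r ∩ A).Nonempty → f x ∈ closedBall x r ∩ A := by
    intro x hx
    simp only [hf, dif_pos hx]
    exact hx.choose_spec
  have hsub : (t' : Set X) ⊆ A := by
    intro y hy
    simp only [ht', Finset.coe_image, Set.mem_image, Finset.coe_filter, Set.mem_setOf_eq] at hy
    obtain ⟨x, ⟨-, hx⟩, rfl⟩ := hy
    exact (hft x hx).2
  have hcov : A ⊆ ⋃ y ∈ t', closedBall y (2 * r) := by
    intro a ha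
    have := hc ha
    simp only [Set.mem_iUnion] at this
    obtain ⟨x, hxt, hax⟩ := this
    have hne : (closedBall x r ∩ A).Nonempty := ⟨a, hax, ha⟩
    have hfx := hft x hne
    refine Set.mem_iUnion₂.2 ⟨f x, ?_, ?_⟩
    · exact Finset.mem_image_of_mem f (Finset.mem_filter.2 ⟨hxt, hne⟩)
    · have h1 : dist a x ≤ r := mem_closedBall.1 hax
      have h2 : dist x (f x) ≤ r := by have := mem_closedBall.1 hfx.1; rwa [dist_comm] at this
      have : dist a (f x) ≤ dist a x + dist x (f x) := dist_triangle _ _ _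
      exact mem_closedBall.2 (by linarith)
  refine (coverNumber_le_card hsub hcov).trans ?_
  exact_mod_cast (Finset.card_image_le.trans (Finset.card_filter_le _ _))

lemma coverNumber_mono_set {A B : Set X} (hAB : A ⊆ B) {r : ℝ} :
    coverNumber A (2 * r) ≤ coverNumber B r := by
  refine le_iInf fun t => le_iInf fun ht => le_iInf fun hc => ?_
  exact coverNumber_le_of_cover t (hAB.trans hc)

lemma coverNumber_lt_top {F : Set X} (htb : TotallyBounded F) {δ : ℝ} (hδ : 0 < δ) :
    coverNumber F δ < ⊤ := by
  obtain ⟨s, hsfin, hs⟩ := (Metric.totallyBounded_iff.1 htb) (δ/2) (by linarith)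
  have hcov : F ⊆ ⋃ x ∈ hsfin.toFinset, closedBall x (δ/2) := by
    refine hs.trans ?_
    intro y hy
    simp only [Set.mem_iUnion] at hy ⊢
    obtain ⟨x, hx, hxy⟩ := hy
    exact ⟨x, hsfin.mem_toFinset.2 hx, ball_subset_closedBall hxy⟩
  have := coverNumber_le_of_cover (A := F) hsfin.toFinset hcov
  rw [show 2 * (δ/2) = δ by ring] at this
  exact this.trans_lt (ENNReal.natCast_lt_top _)

end Basic
section Combinatorial
variable {X : Type*} [MetricSpace X]

/-- submultiplicativity: `N(F,ρ) ≤ N(F,δ) · sup_{x∈F} N(B_δ(x)∩F, ρ)` -/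
lemma coverNumber_le_mul_sup {F : Set X} (htb : TotallyBounded F) {δ ρ : ℝ}
    (hδ : 0 < δ) (hρ : 0 < ρ) :
    coverNumber F ρ ≤ coverNumber F δ * ⨆ x ∈ F, coverNumber (closedBall x δ ∩ F) ρ := by
  classical
  obtain ⟨t, ht1, ht2, ht3⟩ := coverNumber_attained (F := F) (δ := δ)
    (coverNumber_lt_top htb hδ).ne
  have hsub : ∀ x ∈ t, ∃ s : Finset X, (s : Set X) ⊆ closedBall x δ ∩ F ∧
      (closedBall x δ ∩ F ⊆ ⋃ y ∈ s, closedBall y ρ) ∧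
      (s.card : ℝ≥0∞) = coverNumber (closedBall x δ ∩ F) ρ := by
    intro x hx
    exact coverNumber_attained (coverNumber_lt_top (htb.subset (Set.inter_subset_right)) hρ).ne
  choose! s hs1 hs2 hs3 using hsub
  set u : Finset X := t.biUnion s with hu
  have hu1 : (u : Set X) ⊆ F := by
    intro y hy
    simp only [hu, Finset.coe_biUnion, Set.mem_iUnion] at hy
    obtain ⟨x, hx, hy⟩ := hy
    exact (hs1 x hx hy).2
  have hu2 : F ⊆ ⋃ y ∈ u, closedBall y ρ := by
    intro z hz
    have := ht2 hz
    simp only [Set.mem_iUnion] at this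
    obtain ⟨x, hxt, hzx⟩ := this
    have := hs2 x hxt ⟨hzx, hz⟩
    simp only [Set.mem_iUnion] at this
    obtain ⟨y, hys, hzy⟩ := this
    exact Set.mem_iUnion₂.2 ⟨y, Finset.mem_biUnion.2 ⟨x, hxt, hys⟩, hzy⟩
  refine (coverNumber_le_card hu1 hu2).trans ?_
  have h1 : (u.card : ℝ≥0∞) ≤ ∑ x ∈ t, ((s x).card : ℝ≥0∞) := by
    have := Finset.card_biUnion_le (s := t) (t := s)
    exact_mod_cast this
  refine h1.trans ?_
  have h2 : ∀ x ∈ t, ((s x).card : ℝ≥0∞) ≤ ⨆ x ∈ F, coverNumber (closedBall x δ ∩ F) ρ := by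
    intro x hx
    rw [hs3 x hx]
    exact le_iSup₂ (f := fun x (_ : x ∈ F) => coverNumber (closedBall x δ ∩ F) ρ) x (ht1 hx)
  calc ∑ x ∈ t, ((s x).card : ℝ≥0∞)
      ≤ ∑ _x ∈ t, (⨆ x ∈ F, coverNumber (closedBall x δ ∩ F) ρ) := Finset.sum_le_sum h2
    _ = t.card * ⨆ x ∈ F, coverNumber (closedBall x δ ∩ F) ρ := by
        rw [Finset.sum_const, nsmul_eq_mul]
    _ = coverNumber F δ * ⨆ x ∈ F, coverNumber (closedBall x δ ∩ F) ρ := by rw [ht3]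

/-- maximal `2r`-separated subset -/
lemma exists_packing {F : Set X} (htb : TotallyBounded F) (hF : F.Nonempty) {r : ℝ}
    (hr : 0 < r) :
    ∃ P : Finset X, (P : Set X) ⊆ F ∧ P.Nonempty ∧
      (∀ p ∈ P, ∀ q ∈ P, p ≠ q → 2 * r < dist p q) ∧
      coverNumber F (2 * r) ≤ P.card := by
  classical
  obtain ⟨s, hsfin, hs⟩ := (Metric.totallyBounded_iff.1 htb) r hr
  -- bound on cardinality of separated sets
  have hbound : ∀ P : Finset X, (P : Set X) ⊆ F →
      (∀ p ∈ P, ∀ q ∈ P, p ≠ q → 2 * r < dist p q) → P.card ≤ hsfin.toFinset.card := by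
    intro P hP hsep
    have : ∀ p ∈ P, ∃ y ∈ hsfin.toFinset, p ∈ ball y r := by
      intro p hp
      have := hs (hP hp)
      simp only [Set.mem_iUnion] at this
      obtain ⟨y, hy, hpy⟩ := this
      exact ⟨y, hsfin.mem_toFinset.2 hy, hpy⟩
    choose! g hg1 hg2 using this
    refine Finset.card_le_card_of_injOn g (fun p hp => hg1 p hp) ?_
    intro p hp q hq hpq
    by_contra hne
    have h1 : dist p (g p) < r := mem_ball.1 (hg2 p hp)
    have h2 : dist q (g q) < r := mem_ball.1 (hg2 q hq)
    rw [hpq] at h1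
    have : dist p q ≤ dist p (g q) + dist (g q) q := dist_triangle _ _ _
    rw [dist_comm q (g q)] at h2
    have := hsep p hp q hq hne
    linarith
  set A : Set ℕ := {n | ∃ P : Finset X, ((P : Set X) ⊆ F ∧
      (∀ p ∈ P, ∀ q ∈ P, p ≠ q → 2 * r < dist p q)) ∧ P.card = n} with hA
  obtain ⟨x₀, hx₀⟩ := hF
  have h1A : (1 : ℕ) ∈ A := by
    refine ⟨{x₀}, ⟨?_, ?_⟩, by simp⟩
    · simp [hx₀]
    · intro p hp q hq hpq
      simp only [Finset.mem_singleton] at hp hq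
      exact absurd (hp.trans hq.symm) hpq
  have hAne : A.Nonempty := ⟨1, h1A⟩
  have hAbdd : BddAbove A := by
    refine ⟨hsfin.toFinset.card, ?_⟩
    rintro n ⟨P, ⟨hP1, hP2⟩, rfl⟩
    exact hbound P hP1 hP2
  obtain ⟨P, ⟨hP1, hP2⟩, hPcard⟩ := Nat.sSup_mem hAne hAbdd
  have hPne : P.Nonempty := by
    rw [← Finset.card_pos, hPcard]
    exact lt_of_lt_of_le Nat.one_pos (le_csSup hAbdd h1A)
  refine ⟨P, hP1, hPne, hP2, ?_⟩
  have hmax : ∀ y ∈ F, ∃ p ∈ P, dist y p ≤ 2 * r := by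
    intro y hy
    by_contra hcon
    push_neg at hcon
    have hyP : y ∉ P := by
      intro hyP
      have := hcon y hyP
      simp at this
      linarith
    have hsep' : ∀ p ∈ insert y P, ∀ q ∈ insert y P, p ≠ q → 2 * r < dist p q := by
      intro p hp q hq hpq
      rcases Finset.mem_insert.1 hp with rfl | hp'
      · rcases Finset.mem_insert.1 hq with rfl | hq'
        · exact absurd rfl hpq
        · exact hcon q hq'
      · rcases Finset.mem_insert.1 hq with rfl | hq'
        · rw [dist_comm]; exact hcon p hp'
        · exact hP2 p hp' q hq' hpq
    have hmem' : P.card + 1 ∈ A := by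
      refine ⟨insert y P, ⟨?_, hsep'⟩, ?_⟩
      · intro z hz
        simp only [Finset.coe_insert, Set.mem_insert_iff] at hz
        rcases hz with rfl | hz
        · exact hy
        · exact hP1 hz
      · rw [Finset.card_insert_of_notMem hyP]
    have := le_csSup hAbdd hmem'
    rw [← hPcard] at this
    omega
  refine coverNumber_le_card hP1 ?_
  intro y hy
  obtain ⟨p, hp, hyp⟩ := hmax y hy
  exact Set.mem_iUnion₂.2 ⟨p, hp, mem_closedBall.2 hyp⟩

end Combinatorial
section Pigeonhole
variable {X : Type*} [MetricSpace X]

/-- pigeonhole: some ball needs few balls to cover -/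
lemma exists_good_ball {F : Set X} (htb : TotallyBounded F) (hF : F.Nonempty) {r ρ : ℝ}
    (hρ : 0 < ρ) (hrρ : ρ < r) :
    ∃ p ∈ F, coverNumber (closedBall p (r - ρ) ∩ F) (2 * ρ) * coverNumber F (2 * r)
      ≤ coverNumber F ρ := by
  classical
  have hr : 0 < r := hρ.trans hrρ
  obtain ⟨P, hP1, hPne, hPsep, hPcov⟩ := exists_packing htb hF hr
  obtain ⟨T, hT1, hT2, hT3⟩ := coverNumber_attained (F := F) (δ := ρ)
    (coverNumber_lt_top htb hρ).ne
  set k : X → ℕ := fun p => (T.filter (fun z => dist z p ≤ r)).card with hk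
  have hsum : ∑ p ∈ P, k p ≤ T.card := by
    rw [← Finset.card_biUnion]
    · exact Finset.card_le_card (Finset.biUnion_subset.2 fun p _ => Finset.filter_subset _ _)
    · intro p hp q hq hpq
      simp only [Finset.disjoint_left, Finset.mem_filter]
      rintro z ⟨hzT, hzp⟩ ⟨-, hzq⟩
      have := hPsep p hp q hq hpq
      have htri : dist p q ≤ dist p z + dist z q := dist_triangle _ _ _
      rw [dist_comm p z] at htri
      linarith
  obtain ⟨p₀, hp₀P, hmin⟩ := P.exists_min_image k hPne
  have hmul : P.card * k p₀ ≤ T.card := by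
    calc P.card * k p₀ = ∑ _p ∈ P, k p₀ := by rw [Finset.sum_const, smul_eq_mul]
      _ ≤ ∑ p ∈ P, k p := Finset.sum_le_sum fun p hp => hmin p hp
      _ ≤ T.card := hsum
  have hcov : closedBall p₀ (r - ρ) ∩ F ⊆
      ⋃ z ∈ T.filter (fun z => dist z p₀ ≤ r), closedBall z ρ := by
    rintro y ⟨hy1, hy2⟩
    have := hT2 hy2
    simp only [Set.mem_iUnion] at this
    obtain ⟨z, hzT, hyz⟩ := this
    have h1 : dist y z ≤ ρ := mem_closedBall.1 hyz
    have h2 : dist y p₀ ≤ r - ρ := mem_closedBall.1 hy1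
    have h3 : dist z p₀ ≤ dist z y + dist y p₀ := dist_triangle _ _ _
    rw [dist_comm z y] at h3
    refine Set.mem_iUnion₂.2 ⟨z, Finset.mem_filter.2 ⟨hzT, by linarith⟩, hyz⟩
  have hball : coverNumber (closedBall p₀ (r - ρ) ∩ F) (2 * ρ) ≤ (k p₀ : ℝ≥0∞) :=
    coverNumber_le_of_cover _ hcov
  refine ⟨p₀, hP1 hp₀P, ?_⟩
  calc coverNumber (closedBall p₀ (r - ρ) ∩ F) (2 * ρ) * coverNumber F (2 * r)
      ≤ (k p₀ : ℝ≥0∞) * (P.card : ℝ≥0∞) := mul_le_mul' hball hPcov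
    _ = ((P.card * k p₀ : ℕ) : ℝ≥0∞) := by rw [Nat.cast_mul]; ring
    _ ≤ (T.card : ℝ≥0∞) := by exact_mod_cast hmul
    _ = coverNumber F ρ := hT3
end Pigeonhole
section RpowAux

lemma exists_small_rpow_neg {c K a : ℝ} (hc : c < 0) (hK : 0 < K) (ha : 0 < a) :
    ∃ ρ : ℝ, 0 < ρ ∧ ρ < a ∧ K < ρ ^ c := by
  set b : ℝ := Real.exp (Real.log K / c) with hb
  have hbpos : 0 < b := Real.exp_pos _
  have hbc : b ^ c = K := by
    rw [hb, ← Real.exp_mul, div_mul_cancel₀ _ hc.ne, Real.exp_log hK]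
  refine ⟨min a b / 2, by positivity, ?_, ?_⟩
  · calc min a b / 2 ≤ a / 2 := by gcongr; exact min_le_left _ _
      _ < a := by linarith
  · have h1 : min a b / 2 < b := by
      calc min a b / 2 ≤ b / 2 := by gcongr; exact min_le_right _ _
        _ < b := by linarith
    have := Real.rpow_lt_rpow_of_neg (by positivity) h1 hc
    rwa [hbc] at this

lemma exists_small_rpow_pos {c K a : ℝ} (hc : 0 < c) (hK : 0 < K) (ha : 0 < a) :
    ∃ ρ : ℝ, 0 < ρ ∧ ρ < a ∧ ρ ^ c < K := by
  set b : ℝ := Real.exp (Real.log K / c) with hb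
  have hbpos : 0 < b := Real.exp_pos _
  have hbc : b ^ c = K := by
    rw [hb, ← Real.exp_mul, div_mul_cancel₀ _ hc.ne', Real.exp_log hK]
  refine ⟨min a b / 2, by positivity, ?_, ?_⟩
  · calc min a b / 2 ≤ a / 2 := by gcongr; exact min_le_left _ _
      _ < a := by linarith
  · have h1 : min a b / 2 < b := by
      calc min a b / 2 ≤ b / 2 := by gcongr; exact min_le_right _ _
        _ < b := by linarith
    have := Real.rpow_lt_rpow (by positivity) h1 hc
    rwa [hbc] at this

end RpowAux
section Extend
variable {X : Type*} [MetricSpace X]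

/-- extend an upper cover bound to a larger range of scales -/
lemma extend_upper {F : Set X} {d δ₁ C₁ : ℝ} (hd : 0 ≤ d) (hδ₁ : 0 < δ₁) (hC₁ : 0 < C₁)
    (hup : ∀ δ : ℝ, 0 < δ → δ ≤ δ₁ → coverNumber F δ ≤ ENNReal.ofReal (C₁ * δ ^ (-d)))
    {D : ℝ} (hD : 0 < D) :
    ∃ C : ℝ, 0 < C ∧ ∀ δ : ℝ, 0 < δ → δ ≤ D →
      coverNumber F δ ≤ ENNReal.ofReal (C * δ ^ (-d)) := by
  refine ⟨C₁ + C₁ * δ₁ ^ (-d) * D ^ d, by positivity, fun δ hδ hδD => ?_⟩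
  have hu : (0:ℝ) < δ ^ (-d) := Real.rpow_pos_of_pos hδ _
  have hA : (0:ℝ) < δ₁ ^ (-d) := Real.rpow_pos_of_pos hδ₁ _
  have hw : (0:ℝ) < D ^ d := Real.rpow_pos_of_pos hD _
  rcases le_or_gt δ δ₁ with h | h
  · refine (hup δ hδ h).trans (ENNReal.ofReal_le_ofReal ?_)
    nlinarith [mul_pos (mul_pos (mul_pos hC₁ hA) hw) hu]
  · refine (coverNumber_anti h.le).trans ((hup δ₁ hδ₁ le_rfl).trans
      (ENNReal.ofReal_le_ofReal ?_))
    have h2 : D ^ (-d) ≤ δ ^ (-d) := Real.rpow_le_rpow_of_nonpos hδ hδD (neg_nonpos.2 hd)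
    have hv : (0:ℝ) < D ^ (-d) := Real.rpow_pos_of_pos hD _
    have hwv : D ^ d * D ^ (-d) = 1 := by
      rw [Real.rpow_neg hD.le, mul_inv_cancel₀ (Real.rpow_pos_of_pos hD d).ne']
    have key := mul_le_mul_of_nonneg_left h2 (mul_pos (mul_pos hC₁ hA) hw).le
    have e : C₁ * δ₁ ^ (-d) * D ^ d * D ^ (-d) = C₁ * δ₁ ^ (-d) := by
      rw [mul_assoc, hwv, mul_one]
    rw [e] at key
    nlinarith [mul_pos hC₁ hu]

/-- extend a lower cover bound to a larger range of scales -/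
lemma extend_lower {F : Set X} (hF : F.Nonempty) {d δ₂ C₂ : ℝ} (hd : 0 ≤ d)
    (hδ₂ : 0 < δ₂) (hC₂ : 0 < C₂)
    (hlo : ∀ δ : ℝ, 0 < δ → δ ≤ δ₂ → ENNReal.ofReal (C₂⁻¹ * δ ^ (-d)) ≤ coverNumber F δ)
    {D : ℝ} (hD : 0 < D) :
    ∃ C : ℝ, 0 < C ∧ ∀ δ : ℝ, 0 < δ → δ ≤ D →
      ENNReal.ofReal (C⁻¹ * δ ^ (-d)) ≤ coverNumber F δ := by
  refine ⟨C₂ + δ₂ ^ (-d), by positivity, fun δ hδ hδD => ?_⟩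
  have hA : (0:ℝ) < δ₂ ^ (-d) := Real.rpow_pos_of_pos hδ₂ _
  rcases le_or_gt δ δ₂ with h | h
  · refine le_trans (ENNReal.ofReal_le_ofReal ?_) (hlo δ hδ h)
    have hu : (0:ℝ) < δ ^ (-d) := Real.rpow_pos_of_pos hδ _
    have : (C₂ + δ₂ ^ (-d))⁻¹ ≤ C₂⁻¹ := by
      apply inv_anti₀ hC₂
      linarith
    nlinarith
  · refine le_trans ?_ (one_le_coverNumber hF δ)
    apply ENNReal.ofReal_le_one.2
    have h2 : δ ^ (-d) ≤ δ₂ ^ (-d) := Real.rpow_le_rpow_of_nonpos hδ₂ h.le (neg_nonpos.2 hd)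
    have hCpos : (0:ℝ) < C₂ + δ₂ ^ (-d) := by positivity
    rw [inv_mul_le_iff₀ hCpos, mul_one]
    linarith

/-- the exponent is nonnegative -/
lemma d_nonneg {F : Set X} (hF : F.Nonempty) {d δ₁ C₁ : ℝ} (hδ₁ : 0 < δ₁) (hC₁ : 0 < C₁)
    (hup : ∀ δ : ℝ, 0 < δ → δ ≤ δ₁ → coverNumber F δ ≤ ENNReal.ofReal (C₁ * δ ^ (-d))) :
    0 ≤ d := by
  by_contra hd
  push_neg at hd
  obtain ⟨δ, hδ, hδ₁', hδK⟩ := exists_small_rpow_pos (c := -d) (K := C₁⁻¹) (a := δ₁)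
    (by linarith) (by positivity) hδ₁
  have h1 := (one_le_coverNumber hF δ).trans (hup δ hδ hδ₁'.le)
  have h2 : C₁ * δ ^ (-d) < 1 := by
    have := mul_lt_mul_of_pos_left hδK hC₁
    rwa [mul_inv_cancel₀ hC₁.ne'] at this
  exact absurd h1 (not_le.2 (ENNReal.ofReal_lt_one.2 h2))

/-- trivial lower bound when the ratio is bounded -/
lemma trivial_lower_bound {F : Set X} {x : X} (hx : x ∈ F) {d δ ρ B : ℝ} (hd : 0 ≤ d)
    (hρ : 0 < ρ) (hρδ : ρ < δ) (hB : 1 ≤ B) (hratio : δ / ρ ≤ B) :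
    ENNReal.ofReal ((B ^ d)⁻¹ * (δ / ρ) ^ d) ≤ coverNumber (closedBall x δ ∩ F) ρ := by
  have hne : (closedBall x δ ∩ F).Nonempty :=
    ⟨x, mem_closedBall.2 (by simp; linarith), hx⟩
  refine le_trans ?_ (one_le_coverNumber hne ρ)
  apply ENNReal.ofReal_le_one.2
  have h1 : (δ / ρ) ^ d ≤ B ^ d :=
    Real.rpow_le_rpow (div_pos (hρ.trans hρδ) hρ).le hratio hd
  have h2 : (0:ℝ) < B ^ d := Real.rpow_pos_of_pos (by linarith) _
  rw [inv_mul_le_iff₀ h2, mul_one]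
  exact h1

end Extend
section UpperMem
variable {X : Type*} [MetricSpace X]

lemma assouad_upper_mem {F : Set X} (htb : TotallyBounded F) (hF : F.Nonempty)
    (heh : EquiHomogeneous F) {d δ₁ C₁ δ₂ C₂ : ℝ} (hd : 0 ≤ d)
    (hδ₁ : 0 < δ₁) (hC₁ : 0 < C₁)
    (hup : ∀ δ : ℝ, 0 < δ → δ ≤ δ₁ → coverNumber F δ ≤ ENNReal.ofReal (C₁ * δ ^ (-d)))
    (hδ₂ : 0 < δ₂) (hC₂ : 0 < C₂)
    (hlo : ∀ δ : ℝ, 0 < δ → δ ≤ δ₂ → ENNReal.ofReal (C₂⁻¹ * δ ^ (-d)) ≤ coverNumber F δ) :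
    ∀ δ₀ : ℝ, 0 < δ₀ → ∃ C : ℝ, 0 < C ∧ ∀ x ∈ F, ∀ δ ρ : ℝ, 0 < ρ → ρ < δ → δ ≤ δ₀ →
      coverNumber (closedBall x δ ∩ F) ρ ≤ ENNReal.ofReal (C * (δ / ρ) ^ d) := by
  intro δ₀ hδ₀
  obtain ⟨M, c₁, c₂, hM, hc₁, hc₂, hheh⟩ := heh δ₀ hδ₀
  have hM0 : (0:ℝ) < M := lt_of_lt_of_le one_pos hM
  set D : ℝ := (2*c₁ + c₂ + 2) * δ₀ with hDdef
  have hDpos : 0 < D := by positivity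
  obtain ⟨C₁', hC₁', hup'⟩ := extend_upper hd hδ₁ hC₁ hup hDpos
  obtain ⟨C₂', hC₂', hlo'⟩ := extend_lower hF hd hδ₂ hC₂ hlo hDpos
  set K : ℝ := 2 * (2*c₁ + c₂) / c₂ with hKdef
  have hKpos : 0 < K := by positivity
  refine ⟨M * C₁' * C₂' * K ^ d, by positivity, fun x hx δ ρ hρ hρδ hδδ₀ => ?_⟩
  have hδpos : 0 < δ := hρ.trans hρδ
  have hρ' : 0 < c₂ * ρ / 2 := by positivity
  have h2r : (0:ℝ) < 2 * (c₁ * δ + c₂ * ρ / 2) := by positivity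
  obtain ⟨p, hpF, hp⟩ := exists_good_ball htb hF hρ'
    (show c₂*ρ/2 < c₁*δ + c₂*ρ/2 by nlinarith)
  rw [show (c₁*δ + c₂*ρ/2) - c₂*ρ/2 = c₁*δ by ring,
      show 2*(c₂*ρ/2) = c₂*ρ by ring] at hp
  have hsup := hheh δ ρ hρ hρδ hδδ₀
  have hx1 : coverNumber (closedBall x δ ∩ F) ρ ≤
      ⨆ y ∈ F, coverNumber (closedBall y δ ∩ F) ρ :=
    le_iSup₂ (f := fun y (_ : y ∈ F) => coverNumber (closedBall y δ ∩ F) ρ) x hx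
  have hp1 : (⨅ y ∈ F, coverNumber (closedBall y (c₁*δ) ∩ F) (c₂*ρ)) ≤
      coverNumber (closedBall p (c₁*δ) ∩ F) (c₂*ρ) :=
    iInf₂_le (f := fun y (_ : y ∈ F) => coverNumber (closedBall y (c₁*δ) ∩ F) (c₂*ρ)) p hpF
  have hρ'D : c₂ * ρ / 2 ≤ D := by nlinarith
  have h2rD : 2 * (c₁*δ + c₂*ρ/2) ≤ D := by nlinarith
  have ha := hup' _ hρ' hρ'D
  have hβ := hlo' _ h2r h2rD
  set a : ℝ := C₁' * (c₂*ρ/2) ^ (-d) with hadef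
  set β : ℝ := C₂'⁻¹ * (2*(c₁*δ + c₂*ρ/2)) ^ (-d) with hβdef
  have hβpos : 0 < β := by
    rw [hβdef]; positivity
  have hNp : coverNumber (closedBall p (c₁*δ) ∩ F) (c₂*ρ) ≤ ENNReal.ofReal (a / β) := by
    rw [ENNReal.ofReal_div_of_pos hβpos,
        ENNReal.le_div_iff_mul_le (Or.inl (ENNReal.ofReal_pos.2 hβpos).ne')
          (Or.inl ENNReal.ofReal_ne_top)]
    calc coverNumber (closedBall p (c₁*δ) ∩ F) (c₂*ρ) * ENNReal.ofReal β
        ≤ coverNumber (closedBall p (c₁*δ) ∩ F) (c₂*ρ) *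
            coverNumber F (2*(c₁*δ + c₂*ρ/2)) := mul_le_mul_right hβ _
      _ ≤ coverNumber F (c₂*ρ/2) := hp
      _ ≤ ENNReal.ofReal a := ha
  have hchain : coverNumber (closedBall x δ ∩ F) ρ ≤ ENNReal.ofReal (M * (a / β)) := by
    rw [ENNReal.ofReal_mul hM0.le]
    exact hx1.trans (hsup.trans (mul_le_mul_right (hp1.trans hNp) _))
  refine hchain.trans (ENNReal.ofReal_le_ofReal ?_)
  -- real-number computation
  have hu : (0:ℝ) < (c₂*ρ/2) ^ d := Real.rpow_pos_of_pos hρ' _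
  have hv : (0:ℝ) < (2*(c₁*δ + c₂*ρ/2)) ^ d := Real.rpow_pos_of_pos h2r _
  have e1 : a / β = C₁' * C₂' * ((2*(c₁*δ + c₂*ρ/2)) / (c₂*ρ/2)) ^ d := by
    rw [hadef, hβdef, Real.div_rpow h2r.le hρ'.le, Real.rpow_neg hρ'.le,
        Real.rpow_neg h2r.le]
    field_simp
  have hratio : (2*(c₁*δ + c₂*ρ/2)) / (c₂*ρ/2) ≤ K * (δ/ρ) := by
    rw [div_le_iff₀ hρ', hKdef]
    have hc₂ρ : (0:ℝ) < c₂ * ρ := by positivity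
    field_simp
    nlinarith [mul_le_mul_of_nonneg_left hρδ.le hc₂.le]
  have h2 : ((2*(c₁*δ + c₂*ρ/2)) / (c₂*ρ/2)) ^ d ≤ K ^ d * (δ/ρ) ^ d := by
    rw [← Real.mul_rpow hKpos.le (by positivity)]
    exact Real.rpow_le_rpow (by positivity) hratio hd
  calc M * (a / β) = (M * C₁' * C₂') * ((2*(c₁*δ + c₂*ρ/2)) / (c₂*ρ/2)) ^ d := by
        rw [e1]; ring
    _ ≤ (M * C₁' * C₂') * (K ^ d * (δ/ρ) ^ d) := by
        have : (0:ℝ) ≤ M * C₁' * C₂' := by positivity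
        exact mul_le_mul_of_nonneg_left h2 this
    _ = M * C₁' * C₂' * K ^ d * (δ/ρ) ^ d := by ring

end UpperMem
section LowerMem
variable {X : Type*} [MetricSpace X]

lemma ofReal_weaken {C C' t : ℝ} (h : C ≤ C') (ht : 0 ≤ t) {N : ℝ≥0∞}
    (hN : ENNReal.ofReal (C' * t) ≤ N) : ENNReal.ofReal (C * t) ≤ N :=
  le_trans (ENNReal.ofReal_le_ofReal (mul_le_mul_of_nonneg_right h ht)) hN

lemma assouad_lower_mem {F : Set X} (htb : TotallyBounded F) (hF : F.Nonempty)
    (heh : EquiHomogeneous F) {d δ₁ C₁ δ₂ C₂ : ℝ} (hd : 0 ≤ d)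
    (hδ₁ : 0 < δ₁) (hC₁ : 0 < C₁)
    (hup : ∀ δ : ℝ, 0 < δ → δ ≤ δ₁ → coverNumber F δ ≤ ENNReal.ofReal (C₁ * δ ^ (-d)))
    (hδ₂ : 0 < δ₂) (hC₂ : 0 < C₂)
    (hlo : ∀ δ : ℝ, 0 < δ → δ ≤ δ₂ → ENNReal.ofReal (C₂⁻¹ * δ ^ (-d)) ≤ coverNumber F δ) :
    ∀ δ₀ : ℝ, 0 < δ₀ → ∃ C : ℝ, 0 < C ∧ ∀ x ∈ F, ∀ δ ρ : ℝ, 0 < ρ → ρ < δ → δ ≤ δ₀ →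
      ENNReal.ofReal (C * (δ / ρ) ^ d) ≤ coverNumber (closedBall x δ ∩ F) ρ := by
  intro δ₀ hδ₀
  obtain ⟨M, c₁, c₂, hM, hc₁, hc₂, hheh⟩ := heh δ₀ hδ₀
  have hM0 : (0:ℝ) < M := lt_of_lt_of_le one_pos hM
  obtain ⟨C₁', hC₁', hup'⟩ := extend_upper hd hδ₁ hC₁ hup hδ₀
  obtain ⟨C₂', hC₂', hlo'⟩ := extend_lower hF hd hδ₂ hC₂ hlo hδ₀
  set B₁ : ℝ := max (c₁/c₂) 1 with hB₁def
  have hB₁ : 1 ≤ B₁ := le_max_right _ _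
  set Cc : ℝ := min ((B₁ ^ d)⁻¹) ((C₁' * M * C₂')⁻¹ * (c₂/c₁) ^ d) with hCcdef
  have hCcpos : 0 < Cc := by
    apply lt_min
    · have : (0:ℝ) < B₁ ^ d := Real.rpow_pos_of_pos (by linarith) _
      positivity
    · have : (0:ℝ) < (c₂/c₁) ^ d := Real.rpow_pos_of_pos (by positivity) _
      positivity
  -- core estimate, valid for δ ≤ c₁ * δ₀
  have hcore : ∀ x ∈ F, ∀ δ ρ : ℝ, 0 < ρ → ρ < δ → δ ≤ c₁ * δ₀ →
      ENNReal.ofReal (Cc * (δ / ρ) ^ d) ≤ coverNumber (closedBall x δ ∩ F) ρ := by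
    intro x hx δ ρ hρ hρδ hδc
    have hδpos : 0 < δ := hρ.trans hρδ
    rcases le_or_gt (c₂ * δ) (c₁ * ρ) with hcase | hcase
    · -- bounded ratio : trivial bound
      have hratio : δ / ρ ≤ B₁ := by
        refine le_trans ?_ (le_max_left (c₁/c₂) 1)
        rw [div_le_div_iff₀ hρ hc₂]
        nlinarith
      exact ofReal_weaken (min_le_left _ _) (Real.rpow_nonneg (by positivity) _)
        (trivial_lower_bound hx hd hρ hρδ hB₁ hratio)
    · -- main case
      set δ'' : ℝ := δ / c₁ with hδ''def
      set ρ'' : ℝ := ρ / c₂ with hρ''def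
      have hδ''pos : 0 < δ'' := by positivity
      have hρ''pos : 0 < ρ'' := by positivity
      have hρ''δ'' : ρ'' < δ'' := by
        rw [hρ''def, hδ''def, div_lt_div_iff₀ hc₂ hc₁]
        nlinarith
      have hδ''δ₀ : δ'' ≤ δ₀ := by
        rw [hδ''def, div_le_iff₀ hc₁]
        linarith [hδc]
      have hs := hheh δ'' ρ'' hρ''pos hρ''δ'' hδ''δ₀
      rw [show c₁ * δ'' = δ by rw [hδ''def]; field_simp,
          show c₂ * ρ'' = ρ by rw [hρ''def]; field_simp] at hs
      have hinf : (⨅ y ∈ F, coverNumber (closedBall y δ ∩ F) ρ) ≤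
          coverNumber (closedBall x δ ∩ F) ρ :=
        iInf₂_le (f := fun y (_ : y ∈ F) => coverNumber (closedBall y δ ∩ F) ρ) x hx
      have hsub := coverNumber_le_mul_sup htb hδ''pos hρ''pos
      have haa := hlo' ρ'' hρ''pos (by linarith)
      have hbb := hup' δ'' hδ''pos hδ''δ₀
      set b : ℝ := C₁' * δ'' ^ (-d) * M with hbdef
      have hbpos : 0 < b := by
        have : (0:ℝ) < δ'' ^ (-d) := Real.rpow_pos_of_pos hδ''pos _
        positivity
      have hchain : ENNReal.ofReal (C₂'⁻¹ * ρ'' ^ (-d)) ≤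
          ENNReal.ofReal b * coverNumber (closedBall x δ ∩ F) ρ := by
        refine haa.trans (hsub.trans ?_)
        calc coverNumber F δ'' * ⨆ y ∈ F, coverNumber (closedBall y δ'' ∩ F) ρ''
            ≤ ENNReal.ofReal (C₁' * δ'' ^ (-d)) *
              (ENNReal.ofReal M * coverNumber (closedBall x δ ∩ F) ρ) :=
              mul_le_mul' hbb (hs.trans (mul_le_mul_right hinf _))
          _ = ENNReal.ofReal b * coverNumber (closedBall x δ ∩ F) ρ := by
              rw [hbdef, ← mul_assoc, ← ENNReal.ofReal_mul (by positivity)]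
      -- cancel the factor ofReal b
      rw [← ENNReal.mul_le_mul_iff_left (c := ENNReal.ofReal b)
        (ENNReal.ofReal_pos.2 hbpos).ne' ENNReal.ofReal_ne_top]
      refine le_trans ?_ (le_trans hchain (by rw [mul_comm]))
      rw [← ENNReal.ofReal_mul (by positivity)]
      apply ENNReal.ofReal_le_ofReal
      -- real computation
      have hu : (0:ℝ) < δ'' ^ d := Real.rpow_pos_of_pos hδ''pos _
      have hv : (0:ℝ) < ρ'' ^ d := Real.rpow_pos_of_pos hρ''pos _
      have e2 : (c₂/c₁) * (δ/ρ) = δ'' / ρ'' := by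
        rw [hδ''def, hρ''def]
        field_simp
      have key : (c₂/c₁) ^ d * (δ/ρ) ^ d = δ'' ^ d * (ρ'' ^ d)⁻¹ := by
        rw [← Real.mul_rpow (by positivity) (by positivity), e2,
          Real.div_rpow hδ''pos.le hρ''pos.le, div_eq_mul_inv]
      have hCcle : Cc ≤ (C₁' * M * C₂')⁻¹ * (c₂/c₁) ^ d := min_le_right _ _
      calc Cc * (δ/ρ) ^ d * b
          ≤ ((C₁' * M * C₂')⁻¹ * (c₂/c₁) ^ d) * (δ/ρ) ^ d * b := by
            have h0 : (0:ℝ) ≤ (δ/ρ) ^ d * b :=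
              mul_nonneg (Real.rpow_nonneg (by positivity) _) hbpos.le
            nlinarith [mul_le_mul_of_nonneg_right hCcle h0]
        _ = C₂'⁻¹ * ρ'' ^ (-d) := by
            rw [hbdef, Real.rpow_neg hδ''pos.le, Real.rpow_neg hρ''pos.le]
            have : (C₁' * M * C₂')⁻¹ * ((c₂/c₁) ^ d * (δ/ρ) ^ d) * (C₁' * (δ'' ^ d)⁻¹ * M)
                = C₂'⁻¹ * (ρ'' ^ d)⁻¹ := by
              rw [key]
              field_simp
            rw [← this]
            ring
  -- wrap-up : extend to all δ ≤ δ₀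
  set B₂ : ℝ := max (2 * δ₀ / (c₁ * δ₀)) 1 with hB₂def
  have hB₂ : 1 ≤ B₂ := le_max_right _ _
  have hc₁δ₀ : 0 < c₁ * δ₀ := by positivity
  set Cw : ℝ := Cc * ((2 * δ₀ / (c₁ * δ₀)) ^ d)⁻¹ with hCwdef
  have hCwpos : 0 < Cw := by
    have : (0:ℝ) < (2 * δ₀ / (c₁ * δ₀)) ^ d := Real.rpow_pos_of_pos (by positivity) _
    positivity
  refine ⟨min (min Cc ((B₂ ^ d)⁻¹)) Cw, by
    have : (0:ℝ) < B₂ ^ d := Real.rpow_pos_of_pos (by linarith) _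
    positivity, fun x hx δ ρ hρ hρδ hδδ₀ => ?_⟩
  have hδpos : 0 < δ := hρ.trans hρδ
  have htnn : (0:ℝ) ≤ (δ/ρ) ^ d := Real.rpow_nonneg (by positivity) _
  rcases le_or_gt δ (c₁ * δ₀) with h | h
  · exact ofReal_weaken ((min_le_left _ _).trans (min_le_left _ _)) htnn
      (hcore x hx δ ρ hρ hρδ h)
  rcases le_or_gt (c₁ * δ₀) (2 * ρ) with h2 | h2
  · -- ratio bounded : δ/ρ ≤ 2δ₀/(c₁δ₀)
    have hratio : δ / ρ ≤ B₂ := by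
      refine le_trans ?_ (le_max_left _ 1)
      rw [div_le_div_iff₀ hρ hc₁δ₀]
      nlinarith
    exact ofReal_weaken ((min_le_left _ _).trans (min_le_right _ _)) htnn
      (trivial_lower_bound hx hd hρ hρδ hB₂ hratio)
  · -- monotone reduction to scale c₁δ₀
    have hmono : coverNumber (closedBall x (c₁ * δ₀) ∩ F) (2 * ρ) ≤
        coverNumber (closedBall x δ ∩ F) ρ :=
      coverNumber_mono_set (Set.inter_subset_inter_left F
        (closedBall_subset_closedBall h.le))
    have hc := hcore x hx (c₁ * δ₀) (2 * ρ) (by positivity) h2 le_rfl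
    refine le_trans ?_ (hc.trans hmono)
    refine ofReal_weaken (min_le_right _ _) htnn ?_
    rw [hCwdef]
    -- Cc * ((2δ₀/(c₁δ₀))^d)⁻¹ * (δ/ρ)^d ≤ Cc * ((c₁δ₀)/(2ρ))^d
    apply ENNReal.ofReal_le_ofReal
    have hq : (0:ℝ) < (2 * δ₀ / (c₁ * δ₀)) ^ d := Real.rpow_pos_of_pos (by positivity) _
    have hratio2 : δ / ρ ≤ (2 * δ₀ / (c₁ * δ₀)) * ((c₁ * δ₀) / (2 * ρ)) := by
      have e : (2 * δ₀ / (c₁ * δ₀)) * ((c₁ * δ₀) / (2 * ρ)) = δ₀ / ρ := by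
        field_simp
      rw [e]
      gcongr
    have h3 : (δ/ρ) ^ d ≤ (2 * δ₀ / (c₁ * δ₀)) ^ d * ((c₁ * δ₀) / (2 * ρ)) ^ d := by
      rw [← Real.mul_rpow (by positivity) (by positivity)]
      exact Real.rpow_le_rpow (by positivity) hratio2 hd
    calc Cc * ((2 * δ₀ / (c₁ * δ₀)) ^ d)⁻¹ * (δ/ρ) ^ d
        ≤ Cc * ((2 * δ₀ / (c₁ * δ₀)) ^ d)⁻¹ *
          ((2 * δ₀ / (c₁ * δ₀)) ^ d * ((c₁ * δ₀) / (2 * ρ)) ^ d) := by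
          have : (0:ℝ) ≤ Cc * ((2 * δ₀ / (c₁ * δ₀)) ^ d)⁻¹ := by positivity
          exact mul_le_mul_of_nonneg_left h3 this
      _ = Cc * ((c₁ * δ₀) / (2 * ρ)) ^ d := by
          rw [mul_assoc, ← mul_assoc (((2 * δ₀ / (c₁ * δ₀)) ^ d)⁻¹),
            inv_mul_cancel₀ hq.ne', one_mul]
end LowerMem
section Reverse
variable {X : Type*} [MetricSpace X]

lemma upper_set_ge {F : Set X} (htb : TotallyBounded F) (hF : F.Nonempty)
    {d δ₂ C₂ : ℝ} (hδ₂ : 0 < δ₂) (hC₂ : 0 < C₂)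
    (hlo : ∀ δ : ℝ, 0 < δ → δ ≤ δ₂ → ENNReal.ofReal (C₂⁻¹ * δ ^ (-d)) ≤ coverNumber F δ)
    {s : ℝ}
    (hs : ∀ δ₀ : ℝ, 0 < δ₀ → ∃ C : ℝ, 0 < C ∧ ∀ x ∈ F, ∀ δ ρ : ℝ, 0 < ρ → ρ < δ → δ ≤ δ₀ →
      coverNumber (closedBall x δ ∩ F) ρ ≤ ENNReal.ofReal (C * (δ / ρ) ^ s)) :
    d ≤ s := by
  obtain ⟨x₀, hx₀⟩ := hF
  obtain ⟨r, hr⟩ := htb.isBounded.subset_closedBall x₀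
  set R : ℝ := max r 1 with hRdef
  have hR : (0:ℝ) < R := lt_of_lt_of_le one_pos (le_max_right _ _)
  have hFR : F ⊆ closedBall x₀ R := hr.trans (closedBall_subset_closedBall (le_max_left _ _))
  have hinter : closedBall x₀ R ∩ F = F := Set.inter_eq_self_of_subset_right hFR
  obtain ⟨C, hC, hbound⟩ := hs R hR
  by_contra hcon
  push_neg at hcon
  set a : ℝ := min δ₂ (R/2) with hadef
  have ha : 0 < a := lt_min hδ₂ (by linarith)
  have key : ∀ ρ : ℝ, 0 < ρ → ρ ≤ a → ρ ^ (s - d) ≤ C₂ * C * R ^ s := by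
    intro ρ hρ hρa
    have hρR : ρ < R := lt_of_le_of_lt (hρa.trans (min_le_right _ _)) (by linarith)
    have h1 := hbound x₀ hx₀ R ρ hρ hρR le_rfl
    rw [hinter] at h1
    have h2 := (hlo ρ hρ (hρa.trans (min_le_left _ _))).trans h1
    have hreal : C₂⁻¹ * ρ ^ (-d) ≤ C * (R/ρ) ^ s :=
      (ENNReal.ofReal_le_ofReal_iff (by positivity)).1 h2
    have hρs : (0:ℝ) < ρ ^ s := Real.rpow_pos_of_pos hρ _
    have e : C * (R/ρ) ^ s = C * R ^ s * (ρ ^ s)⁻¹ := by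
      rw [Real.div_rpow hR.le hρ.le, div_eq_mul_inv]; ring
    rw [e] at hreal
    have i2 : ρ ^ (s - d) = ρ ^ s * ρ ^ (-d) := by
      rw [sub_eq_add_neg, Real.rpow_add hρ]
    calc ρ ^ (s - d) = (C₂ * ρ ^ s) * (C₂⁻¹ * ρ ^ (-d)) := by
          rw [i2]; field_simp
      _ ≤ (C₂ * ρ ^ s) * (C * R ^ s * (ρ ^ s)⁻¹) :=
          mul_le_mul_of_nonneg_left hreal (by positivity)
      _ = C₂ * C * R ^ s := by field_simp
  obtain ⟨ρ, hρ, hρa, hK⟩ := exists_small_rpow_neg (c := s - d)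
    (K := C₂ * C * R ^ s) (by linarith) (by positivity) ha
  exact absurd (key ρ hρ hρa.le) (not_le.2 hK)

lemma lower_set_le {F : Set X} (htb : TotallyBounded F) (hF : F.Nonempty)
    {d δ₁ C₁ : ℝ} (hδ₁ : 0 < δ₁) (hC₁ : 0 < C₁)
    (hup : ∀ δ : ℝ, 0 < δ → δ ≤ δ₁ → coverNumber F δ ≤ ENNReal.ofReal (C₁ * δ ^ (-d)))
    {s : ℝ}
    (hs : ∀ δ₀ : ℝ, 0 < δ₀ → ∃ C : ℝ, 0 < C ∧ ∀ x ∈ F, ∀ δ ρ : ℝ, 0 < ρ → ρ < δ → δ ≤ δ₀ →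
      ENNReal.ofReal (C * (δ / ρ) ^ s) ≤ coverNumber (closedBall x δ ∩ F) ρ) :
    s ≤ d := by
  obtain ⟨x₀, hx₀⟩ := hF
  obtain ⟨r, hr⟩ := htb.isBounded.subset_closedBall x₀
  set R : ℝ := max r 1 with hRdef
  have hR : (0:ℝ) < R := lt_of_lt_of_le one_pos (le_max_right _ _)
  have hFR : F ⊆ closedBall x₀ R := hr.trans (closedBall_subset_closedBall (le_max_left _ _))
  have hinter : closedBall x₀ R ∩ F = F := Set.inter_eq_self_of_subset_right hFR
  obtain ⟨C, hC, hbound⟩ := hs R hR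
  by_contra hcon
  push_neg at hcon
  set a : ℝ := min δ₁ (R/2) with hadef
  have ha : 0 < a := lt_min hδ₁ (by linarith)
  have hRs : (0:ℝ) < R ^ s := Real.rpow_pos_of_pos hR _
  have key : ∀ ρ : ℝ, 0 < ρ → ρ ≤ a → ρ ^ (d - s) ≤ C₁ * (C * R ^ s)⁻¹ := by
    intro ρ hρ hρa
    have hρR : ρ < R := lt_of_le_of_lt (hρa.trans (min_le_right _ _)) (by linarith)
    have h1 := hbound x₀ hx₀ R ρ hρ hρR le_rfl
    rw [hinter] at h1
    have h2 := h1.trans (hup ρ hρ (hρa.trans (min_le_left _ _)))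
    have hρd : (0:ℝ) < ρ ^ d := Real.rpow_pos_of_pos hρ _
    have hρs : (0:ℝ) < ρ ^ s := Real.rpow_pos_of_pos hρ _
    have hreal : C * (R/ρ) ^ s ≤ C₁ * ρ ^ (-d) :=
      (ENNReal.ofReal_le_ofReal_iff (by positivity)).1 h2
    have e1 : C * (R/ρ) ^ s = C * R ^ s * (ρ ^ s)⁻¹ := by
      rw [Real.div_rpow hR.le hρ.le, div_eq_mul_inv]; ring
    have e2 : C₁ * ρ ^ (-d) = C₁ * (ρ ^ d)⁻¹ := by rw [Real.rpow_neg hρ.le]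
    rw [e1, e2] at hreal
    have i2 : ρ ^ (d - s) = ρ ^ d * (ρ ^ s)⁻¹ := by
      rw [sub_eq_add_neg, Real.rpow_add hρ, Real.rpow_neg hρ.le]
    calc ρ ^ (d - s) = ((C * R ^ s)⁻¹ * ρ ^ d) * (C * R ^ s * (ρ ^ s)⁻¹) := by
          rw [i2]; field_simp
      _ ≤ ((C * R ^ s)⁻¹ * ρ ^ d) * (C₁ * (ρ ^ d)⁻¹) :=
          mul_le_mul_of_nonneg_left hreal (by positivity)
      _ = C₁ * (C * R ^ s)⁻¹ := by field_simp
  obtain ⟨ρ, hρ, hρa, hK⟩ := exists_small_rpow_neg (c := d - s)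
    (K := C₁ * (C * R ^ s)⁻¹) (by linarith) (by positivity) ha
  exact absurd (key ρ hρ hρa.le) (not_le.2 hK)

end Reverse
section Final
variable {X : Type*} [MetricSpace X]

lemma upperBoxDim_empty : upperBoxDim (∅ : Set X) = 0 := by
  have h : (fun δ : ℝ => Real.log (coverNumber (∅ : Set X) δ).toReal / -Real.log δ)
      = fun _ : ℝ => (0:ℝ) := by
    funext δ
    simp [coverNumber_empty]
  rw [upperBoxDim, h]
  exact Filter.limsup_const 0

lemma assouadDim_empty : assouadDim (∅ : Set X) = 0 := by
  have hset : {s : ℝ | 0 ≤ s ∧ ∀ δ₀ : ℝ, 0 < δ₀ → ∃ C : ℝ, 0 < C ∧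
      ∀ x ∈ (∅ : Set X), ∀ δ ρ : ℝ, 0 < ρ → ρ < δ → δ ≤ δ₀ →
        coverNumber (closedBall x δ ∩ (∅ : Set X)) ρ ≤ ENNReal.ofReal (C * (δ / ρ) ^ s)}
      = Set.Ici (0:ℝ) := by
    ext s
    constructor
    · exact fun h => h.1
    · exact fun h => ⟨h, fun δ₀ hδ₀ => ⟨1, one_pos,
        fun x hx => absurd hx (Set.notMem_empty x)⟩⟩
  rw [assouadDim, hset, csInf_Ici]

lemma lowerAssouadDim_empty : lowerAssouadDim (∅ : Set X) = 0 := by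
  have hset : {s : ℝ | 0 ≤ s ∧ ∀ δ₀ : ℝ, 0 < δ₀ → ∃ C : ℝ, 0 < C ∧
      ∀ x ∈ (∅ : Set X), ∀ δ ρ : ℝ, 0 < ρ → ρ < δ → δ ≤ δ₀ →
        ENNReal.ofReal (C * (δ / ρ) ^ s) ≤ coverNumber (closedBall x δ ∩ (∅ : Set X)) ρ}
      = Set.Ici (0:ℝ) := by
    ext s
    constructor
    · exact fun h => h.1
    · exact fun h => ⟨h, fun δ₀ hδ₀ => ⟨1, one_pos,
        fun x hx => absurd hx (Set.notMem_empty x)⟩⟩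
  rw [lowerAssouadDim, hset, Real.sSup_of_not_bddAbove]
  intro ⟨b, hb⟩
  have h1 := hb (le_max_right b 0 : (max b 0 : ℝ) ∈ Set.Ici 0)
  have h2 := hb (Set.mem_Ici.2 (by positivity : (0:ℝ) ≤ max b 0 + 1))
  linarith [le_max_left b 0]

end Final

theorem equiHomogeneous_attained_boxDims_eq' {X : Type*} [MetricSpace X] (F : Set X)
    (htb : TotallyBounded F)
    (heh : EquiHomogeneous F)
    (hupper : ∃ δ₀ C : ℝ, 0 < δ₀ ∧ 1 ≤ C ∧ ∀ δ : ℝ, 0 < δ → δ ≤ δ₀ →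
      coverNumber F δ ≤ ENNReal.ofReal (C * δ ^ (-upperBoxDim F)))
    (hlower : ∃ δ₀ C : ℝ, 0 < δ₀ ∧ 1 ≤ C ∧ ∀ δ : ℝ, 0 < δ → δ ≤ δ₀ →
      ENNReal.ofReal (C⁻¹ * δ ^ (-lowerBoxDim F)) ≤ coverNumber F δ)
    (heq : lowerBoxDim F = upperBoxDim F) :
    assouadDim F = upperBoxDim F ∧ upperBoxDim F = lowerBoxDim F ∧
      lowerBoxDim F = lowerAssouadDim F := by
  rcases F.eq_empty_or_nonempty with rfl | hF
  · refine ⟨?_, heq.symm, ?_⟩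
    · rw [assouadDim_empty, upperBoxDim_empty]
    · rw [heq, upperBoxDim_empty, lowerAssouadDim_empty]
  · obtain ⟨δ₁, C₁, hδ₁, hC₁, hup⟩ := hupper
    obtain ⟨δ₂, C₂, hδ₂, hC₂, hlo⟩ := hlower
    rw [heq] at hlo
    have hC₁0 : (0:ℝ) < C₁ := lt_of_lt_of_le one_pos hC₁
    have hC₂0 : (0:ℝ) < C₂ := lt_of_lt_of_le one_pos hC₂
    have hd0 : 0 ≤ upperBoxDim F := d_nonneg hF hδ₁ hC₁0 hup
    have hmemU : upperBoxDim F ∈ {s : ℝ | 0 ≤ s ∧ ∀ δ₀ : ℝ, 0 < δ₀ → ∃ C : ℝ, 0 < C ∧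
        ∀ x ∈ F, ∀ δ ρ : ℝ, 0 < ρ → ρ < δ → δ ≤ δ₀ →
          coverNumber (closedBall x δ ∩ F) ρ ≤ ENNReal.ofReal (C * (δ / ρ) ^ s)} :=
      ⟨hd0, assouad_upper_mem htb hF heh hd0 hδ₁ hC₁0 hup hδ₂ hC₂0 hlo⟩
    have hmemL : upperBoxDim F ∈ {s : ℝ | 0 ≤ s ∧ ∀ δ₀ : ℝ, 0 < δ₀ → ∃ C : ℝ, 0 < C ∧
        ∀ x ∈ F, ∀ δ ρ : ℝ, 0 < ρ → ρ < δ → δ ≤ δ₀ →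
          ENNReal.ofReal (C * (δ / ρ) ^ s) ≤ coverNumber (closedBall x δ ∩ F) ρ} :=
      ⟨hd0, assouad_lower_mem htb hF heh hd0 hδ₁ hC₁0 hup hδ₂ hC₂0 hlo⟩
    have hA : assouadDim F = upperBoxDim F := by
      rw [assouadDim]
      apply le_antisymm
      · exact csInf_le ⟨0, fun s hs => hs.1⟩ hmemU
      · exact le_csInf ⟨_, hmemU⟩
          (fun s hs => upper_set_ge htb hF hδ₂ hC₂0 hlo hs.2)
    have hub : ∀ s ∈ {s : ℝ | 0 ≤ s ∧ ∀ δ₀ : ℝ, 0 < δ₀ → ∃ C : ℝ, 0 < C ∧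
        ∀ x ∈ F, ∀ δ ρ : ℝ, 0 < ρ → ρ < δ → δ ≤ δ₀ →
          ENNReal.ofReal (C * (δ / ρ) ^ s) ≤ coverNumber (closedBall x δ ∩ F) ρ},
        s ≤ upperBoxDim F :=
      fun s hs => lower_set_le htb hF hδ₁ hC₁0 hup hs.2
    have hLA : lowerAssouadDim F = upperBoxDim F := by
      rw [lowerAssouadDim]
      apply le_antisymm
      · exact csSup_le ⟨_, hmemL⟩ hub
      · exact le_csSup ⟨_, hub⟩ hmemL
    exact ⟨hA, heq.symm, by rw [heq, hLA]⟩

/-- If a totally bounded set `F` is equi-homogeneous, attains both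
its upper and lower box-counting dimensions, and `dim_LB F = dim_B F`, then
`dim_A F = dim_B F = dim_LB F = dim_LA F`. -/
theorem equiHomogeneous_attained_boxDims_eq {X : Type*} [MetricSpace X] (F : Set X)
    (htb : TotallyBounded F)
    (heh : EquiHomogeneous F)
    (hupper : ∃ δ₀ C : ℝ, 0 < δ₀ ∧ 1 ≤ C ∧ ∀ δ : ℝ, 0 < δ → δ ≤ δ₀ →
      coverNumber F δ ≤ ENNReal.ofReal (C * δ ^ (-upperBoxDim F)))
    (hlower : ∃ δ₀ C : ℝ, 0 < δ₀ ∧ 1 ≤ C ∧ ∀ δ : ℝ, 0 < δ → δ ≤ δ₀ →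
      ENNReal.ofReal (C⁻¹ * δ ^ (-lowerBoxDim F)) ≤ coverNumber F δ)
    (heq : lowerBoxDim F = upperBoxDim F) :
    assouadDim F = upperBoxDim F ∧ upperBoxDim F = lowerBoxDim F ∧
      lowerBoxDim F = lowerAssouadDim F := by
  exact equiHomogeneous_attained_boxDims_eq' F htb heh hupper hlower heq
end

section
/- The set F = {0, 1} ∪ {2^{−n} : n ∈ ℕ} ⊆ ℝ satisfies dim_A F = dim_LA F = 0, but F is not equi-homogeneous. -/
open Set Metric Filter Bornology MeasureTheory
open scoped ENNReal NNReal

namespace EH16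

noncomputable def P (n : ℕ) : ℝ := (2:ℝ) ^ (-(n:ℝ))

lemma P_eq (n : ℕ) : P n = ((2:ℝ)^n)⁻¹ := by
  rw [P, Real.rpow_neg (by norm_num), Real.rpow_natCast]

lemma P_pos (n : ℕ) : 0 < P n := by rw [P_eq]; positivity

lemma P_anti : StrictAnti P := by
  intro a b hab
  rw [P_eq, P_eq]
  exact inv_strictAnti₀ (by positivity) (by exact pow_lt_pow_right₀ (by norm_num) hab)

lemma P_succ (n : ℕ) : P (n+1) = P n / 2 := by
  rw [P_eq, P_eq, pow_succ]
  field_simp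

lemma P_le_half {n : ℕ} (hn : 1 ≤ n) : P n ≤ 1/2 := by
  have : P n ≤ P 1 := P_anti.antitone hn
  simpa [P_eq] using this

lemma exists_P_lt {ε : ℝ} (hε : 0 < ε) : ∃ n, P n < ε := by
  obtain ⟨n, hn⟩ := exists_pow_lt_of_lt_one hε (by norm_num : (1:ℝ)/2 < 1)
  refine ⟨n, ?_⟩
  rw [P_eq]
  rw [one_div] at hn
  simpa [inv_pow] using hn

noncomputable def Eset : Set ℝ :=
  insert (0 : ℝ) (insert 1 {x : ℝ | ∃ n : ℕ, 1 ≤ n ∧ x = (2 : ℝ) ^ (-(n : ℝ))})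

lemma mem_Eset {y : ℝ} : y ∈ Eset ↔ y = 0 ∨ y = 1 ∨ ∃ n : ℕ, 1 ≤ n ∧ y = P n := by
  simp [Eset, P]

lemma Eset_nonneg {y : ℝ} (hy : y ∈ Eset) : 0 ≤ y := by
  rcases mem_Eset.mp hy with h | h | ⟨n, _, h⟩
  · simp [h]
  · simp [h]
  · rw [h]; exact (P_pos n).le

lemma zero_mem : (0:ℝ) ∈ Eset := by simp [Eset]
lemma one_mem : (1:ℝ) ∈ Eset := by simp [Eset]
lemma P_mem {n : ℕ} (hn : 1 ≤ n) : P n ∈ Eset := mem_Eset.mpr (Or.inr (Or.inr ⟨n, hn, rfl⟩))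

lemma coverNumber_le_card {X : Type*} [MetricSpace X] {F : Set X} {δ : ℝ} (t : Finset X)
    (h1 : (t : Set X) ⊆ F) (h2 : F ⊆ ⋃ x ∈ t, closedBall x δ) :
    coverNumber F δ ≤ (t.card : ℝ≥0∞) :=
  iInf_le_of_le t (iInf_le_of_le h1 (iInf_le_of_le h2 le_rfl))

lemma le_coverNumber_of_separated {X : Type*} [MetricSpace X] {F : Set X} {ρ : ℝ}
    (s : Finset X) (hs : (s : Set X) ⊆ F)
    (hsep : ∀ a ∈ s, ∀ b ∈ s, a ≠ b → 2 * ρ < dist a b) :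
    (s.card : ℝ≥0∞) ≤ coverNumber F ρ := by
  refine le_iInf fun t => le_iInf fun ht1 => le_iInf fun ht2 => ?_
  refine Nat.cast_le.mpr ?_
  classical
  have hcov : ∀ a ∈ s, ∃ c ∈ t, a ∈ closedBall c ρ := by
    intro a ha
    have := ht2 (hs ha)
    simpa using this
  refine Finset.card_le_card_of_injOn
    (fun a => if h : ∃ c ∈ t, a ∈ closedBall c ρ then h.choose else a) ?_ ?_
  · intro a ha
    have h := hcov a ha
    simp only [dif_pos h]
    exact h.choose_spec.1
  · intro a ha b hb hab
    by_contra hne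
    have ha' := hcov a (by simpa using ha)
    have hb' := hcov b (by simpa using hb)
    simp only [dif_pos ha', dif_pos hb'] at hab
    have d1 : dist a ha'.choose ≤ ρ := by simpa [Metric.mem_closedBall] using ha'.choose_spec.2
    have d2 : dist b hb'.choose ≤ ρ := by simpa [Metric.mem_closedBall] using hb'.choose_spec.2
    have hd : dist a b ≤ 2 * ρ := by
      calc dist a b ≤ dist a ha'.choose + dist b hb'.choose := by
            rw [hab]; exact dist_triangle_right a b hb'.choose
        _ ≤ ρ + ρ := add_le_add d1 d2
        _ = 2 * ρ := by ring
    linarith [hsep a (by simpa using ha) b (by simpa using hb) hne]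

lemma one_le_coverNumber {X : Type*} [MetricSpace X] {F : Set X} {ρ : ℝ}
    (h : F.Nonempty) : 1 ≤ coverNumber F ρ := by
  classical
  obtain ⟨x, hx⟩ := h
  have := le_coverNumber_of_separated (F := F) (ρ := ρ) {x} (by simpa using hx)
    (by intro a ha b hb hab; simp at ha hb; subst ha; subst hb; exact absurd rfl hab)
  simpa using this

lemma coverNumber_singleton_le {X : Type*} [MetricSpace X] {x : X} {ρ : ℝ} (hρ : 0 ≤ ρ) :
    coverNumber {x} ρ ≤ 1 := by
  have := coverNumber_le_card (F := ({x} : Set X)) (δ := ρ) {x}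
    (by simp) (by intro y hy; simp at hy; subst hy; simp [Metric.mem_closedBall, hρ])
  simpa using this

lemma ball_one_inter {r : ℝ} (h0 : 0 ≤ r) (hr : r ≤ 1/4) :
    closedBall (1:ℝ) r ∩ Eset = {1} := by
  ext y
  simp only [Set.mem_inter_iff, Real.closedBall_eq_Icc, Set.mem_Icc, Set.mem_singleton_iff]
  constructor
  · rintro ⟨⟨h1, h2⟩, hy⟩
    rcases mem_Eset.mp hy with h | h | ⟨n, hn, h⟩
    · exfalso; rw [h] at h1; linarith
    · exact h
    · exfalso
      have := P_le_half hn
      rw [h] at h1; linarith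
  · rintro rfl
    exact ⟨⟨by linarith, by linarith⟩, one_mem⟩

lemma geom_card {S : Finset ℕ} {L U : ℝ} (hL : 0 < L) (hS : S.Nonempty)
    (h : ∀ n ∈ S, L ≤ P n ∧ P n ≤ U) :
    (2:ℝ) ^ (S.card - 1) ≤ U / L := by
  set m := S.min' hS with hm
  set M := S.max' hS with hM
  have hsub : S ⊆ Finset.Icc m M := fun n hn =>
    Finset.mem_Icc.mpr ⟨S.min'_le n hn, S.le_max' n hn⟩
  have hcard : S.card ≤ M + 1 - m := by
    have := Finset.card_le_card hsub
    simpa [Nat.card_Icc] using this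
  have hmM : m ≤ M := S.min'_le M (S.max'_mem hS)
  have h1 : S.card - 1 ≤ M - m := by omega
  have hmem := h m (S.min'_mem hS)
  have hMem := h M (S.max'_mem hS)
  calc (2:ℝ) ^ (S.card - 1) ≤ 2 ^ (M - m) := pow_le_pow_right₀ (by norm_num) h1
    _ = (2:ℝ)^M / 2^m := by
        rw [pow_sub₀ (2:ℝ) (by norm_num) hmM]
        rw [div_eq_mul_inv]
    _ = P m / P M := by rw [P_eq, P_eq]; field_simp
    _ ≤ U / L := by
        gcongr
        · exact le_trans (P_pos m).le hmem.2
        · exact hmem.2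
        · exact hMem.1

lemma main_upper {x δ ρ s : ℝ} (hx : x ∈ Eset) (hρ : 0 < ρ) (hδρ : ρ < δ) (hs : 0 < s) :
    coverNumber (closedBall x δ ∩ Eset) ρ ≤
      ENNReal.ofReal ((3 + 3^s/(2^s-1)) * (δ/ρ)^s) := by
  classical
  have hδ : 0 < δ := lt_trans hρ hδρ
  set G := closedBall x δ ∩ Eset with hGdef
  obtain ⟨N', hN'⟩ : ∃ N', P N' < ρ := exists_P_lt hρ
  set A : Finset ℕ := (Finset.range N').filter (fun n => ρ < P n ∧ P n ∈ G) with hA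
  set t₁ : Finset ℝ := if (1:ℝ) ∈ G then {(1:ℝ)} else ∅ with ht₁
  set t₂ : Finset ℝ := if h : ∃ m, m ∈ G ∧ m ≤ ρ then {h.choose} else ∅ with ht₂
  set t : Finset ℝ := A.image P ∪ t₁ ∪ t₂ with ht
  have htG : (t : Set ℝ) ⊆ G := by
    intro y hy
    simp only [ht, Finset.coe_union, Set.mem_union, Finset.coe_image, Set.mem_image,
      Finset.mem_coe] at hy
    rcases hy with (⟨n, hn, rfl⟩ | hy) | hy
    · exact ((Finset.mem_filter.mp hn).2).2
    · rw [ht₁] at hy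
      by_cases h1 : (1:ℝ) ∈ G
      · rw [if_pos h1] at hy; simp at hy; subst hy; exact h1
      · rw [if_neg h1] at hy; simp at hy
    · rw [ht₂] at hy
      by_cases h2 : ∃ m, m ∈ G ∧ m ≤ ρ
      · rw [dif_pos h2] at hy; simp at hy; subst hy; exact h2.choose_spec.1
      · rw [dif_neg h2] at hy; simp at hy
  have htcov : G ⊆ ⋃ y ∈ t, closedBall y ρ := by
    intro g hg
    rcases le_or_gt g ρ with hgρ | hgρ
    · have h2 : ∃ m, m ∈ G ∧ m ≤ ρ := ⟨g, hg, hgρ⟩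
      set c := h2.choose with hc
      have hcG := h2.choose_spec.1
      have hcρ := h2.choose_spec.2
      have hct : c ∈ t := by
        simp only [ht, Finset.mem_union]
        right; rw [ht₂, dif_pos h2]; simp [hc]
      refine Set.mem_biUnion hct ?_
      have hg0 : 0 ≤ g := Eset_nonneg hg.2
      have hc0 : 0 ≤ c := Eset_nonneg hcG.2
      simp only [Metric.mem_closedBall, Real.dist_eq]
      rw [abs_sub_le_iff]
      constructor <;> linarith
    · rcases mem_Eset.mp hg.2 with h0 | h1 | ⟨n, hn1, hPn⟩
      · exfalso; rw [h0] at hgρ; linarith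
      · have h1G : (1:ℝ) ∈ G := h1 ▸ hg
        have h1t : (1:ℝ) ∈ t := by
          simp only [ht, Finset.mem_union]
          left; right; rw [ht₁, if_pos h1G]; simp
        refine Set.mem_biUnion h1t ?_
        simp [Metric.mem_closedBall, h1, hρ.le]
      · have hnA : n ∈ A := by
          rw [hA, Finset.mem_filter, Finset.mem_range]
          refine ⟨?_, hPn ▸ hgρ, hPn ▸ hg⟩
          by_contra hcon
          push_neg at hcon
          have : P n ≤ P N' := P_anti.antitone hcon
          rw [← hPn] at this
          linarith
        have hgt : g ∈ t := by
          simp only [ht, Finset.mem_union]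
          left; left
          exact Finset.mem_image.mpr ⟨n, hnA, hPn.symm⟩
        refine Set.mem_biUnion hgt ?_
        simp [Metric.mem_closedBall, hρ.le]
  have hcard : t.card ≤ A.card + 2 := by
    have c1 : t₁.card ≤ 1 := by
      rw [ht₁]; split <;> simp
    have c2 : t₂.card ≤ 1 := by
      rw [ht₂]; split <;> simp
    calc t.card ≤ (A.image P ∪ t₁).card + t₂.card := Finset.card_union_le _ _
      _ ≤ (A.image P).card + t₁.card + t₂.card := by
          have := Finset.card_union_le (A.image P) t₁
          omega
      _ ≤ A.card + 1 + 1 := by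
          have := Finset.card_image_le (f := P) (s := A)
          omega
      _ = A.card + 2 := by omega
  set T := δ / ρ with hT
  have hT1 : 1 ≤ T := (one_le_div hρ).mpr hδρ.le
  have hT0 : 0 < T := div_pos hδ hρ
  have hTs : 1 ≤ T ^ s := by
    have := Real.rpow_le_rpow (by norm_num : (0:ℝ) ≤ 1) hT1 hs.le
    simpa using this
  have ha : 0 < (2:ℝ)^s - 1 := by
    have : (2:ℝ)^(0:ℝ) < 2^s := Real.rpow_lt_rpow_of_exponent_lt (by norm_num) hs
    simp only [Real.rpow_zero] at this
    linarith
  have h3s : 0 < (3:ℝ)^s := Real.rpow_pos_of_pos (by norm_num) s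
  have hnum : (A.card : ℝ) + 2 ≤ (3 + 3^s/(2^s-1)) * T^s := by
    rcases A.eq_empty_or_nonempty with hAe | hAne
    · rw [hAe]
      simp only [Finset.card_empty, Nat.cast_zero, zero_add]
      have hCpos : (0:ℝ) ≤ 3^s/(2^s-1) := div_nonneg h3s.le ha.le
      have : (3:ℝ) * 1 ≤ (3 + 3^s/(2^s-1)) * T^s := by
        apply mul_le_mul (by linarith) hTs (by norm_num) (by linarith)
      linarith
    · set L := max ρ (x - δ) with hL
      set U := x + δ with hU
      have hL0 : 0 < L := lt_of_lt_of_le hρ (le_max_left _ _)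
      have hmem : ∀ n ∈ A, L ≤ P n ∧ P n ≤ U := by
        intro n hn
        rw [hA, Finset.mem_filter] at hn
        obtain ⟨-, hρn, hnG⟩ := hn
        have hball : P n ∈ closedBall x δ := hnG.1
        rw [Metric.mem_closedBall, Real.dist_eq, abs_sub_le_iff] at hball
        constructor
        · exact max_le hρn.le (by linarith [hball.2])
        · rw [hU]; linarith [hball.1]
      have h2j : (2:ℝ)^(A.card - 1) ≤ U / L := geom_card hL0 hAne hmem
      have hUL : U / L ≤ 3 * T := by
        have hxL : x ≤ L + δ := by
          rcases le_or_gt ρ (x - δ) with h | h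
          · have : x - δ ≤ L := le_max_right _ _
            linarith
          · have : ρ ≤ L := le_max_left _ _
            linarith
        rw [div_le_iff₀ hL0, hT]
        have hρL : ρ ≤ L := le_max_left _ _
        have h3 : 3 * (δ/ρ) * L = 3 * δ * (L / ρ) := by ring
        have hLρ : (1:ℝ) ≤ L / ρ := (one_le_div hρ).mpr hρL
        nlinarith [hδ.le, hρ.le]
      have h2j' : (2:ℝ)^(A.card - 1) ≤ 3 * T := le_trans h2j hUL
      set j := A.card - 1 with hj
      have hjb : (j:ℝ) * (2^s - 1) ≤ ((2:ℝ)^j)^s := by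
        have hber : 1 + (j:ℝ) * (2^s - 1) ≤ (1 + (2^s - 1))^j :=
          one_add_mul_le_pow (by linarith) j
        have heq : ((1:ℝ) + (2^s - 1)) = 2^s := by ring
        rw [heq] at hber
        have hpow : ((2:ℝ)^s)^j = ((2:ℝ)^j)^s := by
          rw [← Real.rpow_natCast ((2:ℝ)^s) j, ← Real.rpow_natCast (2:ℝ) j,
            ← Real.rpow_mul (by norm_num), ← Real.rpow_mul (by norm_num), mul_comm]
        rw [hpow] at hber
        linarith
      have hjs : ((2:ℝ)^j)^s ≤ 3^s * T^s := by
        have := Real.rpow_le_rpow (by positivity) h2j' hs.le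
        rwa [Real.mul_rpow (by norm_num) hT0.le] at this
      have hjle : (j:ℝ) ≤ 3^s * T^s / (2^s - 1) := by
        rw [le_div_iff₀ ha]
        linarith
      have hcardj : (A.card : ℝ) = (j:ℝ) + 1 := by
        have h1 : 1 ≤ A.card := Finset.card_pos.mpr hAne
        rw [hj]
        push_cast [Nat.cast_sub h1]
        ring
      rw [hcardj]
      have hkey : (3:ℝ)^s/(2^s-1)*T^s = 3^s*T^s/(2^s-1) := by ring
      have h3T : (3:ℝ) ≤ 3 * T^s := by linarith
      calc (j:ℝ) + 1 + 2 = (j:ℝ) + 3 := by ring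
        _ ≤ 3^s * T^s / (2^s - 1) + 3 * T^s := by linarith
        _ = (3 + 3^s/(2^s-1)) * T^s := by ring
  calc coverNumber G ρ ≤ (t.card : ℝ≥0∞) := coverNumber_le_card t htG htcov
    _ ≤ ((A.card + 2 : ℕ) : ℝ≥0∞) := by exact_mod_cast hcard
    _ = ENNReal.ofReal ((A.card : ℝ) + 2) := by
        rw [← ENNReal.ofReal_natCast]
        norm_num
    _ ≤ ENNReal.ofReal ((3 + 3^s/(2^s-1)) * T^s) := ENNReal.ofReal_le_ofReal hnum

lemma mem_SA {s : ℝ} (hs : 0 < s) :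
    s ∈ {s : ℝ | 0 ≤ s ∧ ∀ δ₀ : ℝ, 0 < δ₀ → ∃ C : ℝ, 0 < C ∧
      ∀ x ∈ Eset, ∀ δ ρ : ℝ, 0 < ρ → ρ < δ → δ ≤ δ₀ →
        coverNumber (closedBall x δ ∩ Eset) ρ ≤ ENNReal.ofReal (C * (δ / ρ) ^ s)} := by
  have ha : 0 < (2:ℝ)^s - 1 := by
    have : (2:ℝ)^(0:ℝ) < 2^s := Real.rpow_lt_rpow_of_exponent_lt (by norm_num) hs
    simp only [Real.rpow_zero] at this
    linarith
  have h3s : 0 < (3:ℝ)^s := Real.rpow_pos_of_pos (by norm_num) s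
  have hC : 0 < 3 + (3:ℝ)^s/(2^s-1) := by
    have : 0 < (3:ℝ)^s/(2^s-1) := div_pos h3s ha
    linarith
  exact ⟨hs.le, fun δ₀ hδ₀ => ⟨3 + 3^s/(2^s-1), hC,
    fun x hx δ ρ hρ hρδ hδδ₀ => main_upper hx hρ hρδ hs⟩⟩

lemma assouad_zero : assouadDim Eset = 0 := by
  rw [assouadDim]
  set S := {s : ℝ | 0 ≤ s ∧ ∀ δ₀ : ℝ, 0 < δ₀ → ∃ C : ℝ, 0 < C ∧
      ∀ x ∈ Eset, ∀ δ ρ : ℝ, 0 < ρ → ρ < δ → δ ≤ δ₀ →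
        coverNumber (closedBall x δ ∩ Eset) ρ ≤ ENNReal.ofReal (C * (δ / ρ) ^ s)} with hSdef
  have hbdd : BddBelow S := ⟨0, fun s hs => hs.1⟩
  have hne : S.Nonempty := ⟨1, mem_SA one_pos⟩
  refine le_antisymm ?_ (le_csInf hne fun s hs => hs.1)
  by_contra hcon
  push_neg at hcon
  have := csInf_le hbdd (mem_SA (half_pos hcon))
  linarith

lemma lower_zero : lowerAssouadDim Eset = 0 := by
  rw [lowerAssouadDim]
  set S := {s : ℝ | 0 ≤ s ∧ ∀ δ₀ : ℝ, 0 < δ₀ → ∃ C : ℝ, 0 < C ∧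
      ∀ x ∈ Eset, ∀ δ ρ : ℝ, 0 < ρ → ρ < δ → δ ≤ δ₀ →
        ENNReal.ofReal (C * (δ / ρ) ^ s) ≤ coverNumber (closedBall x δ ∩ Eset) ρ} with hSdef
  have h0mem : (0:ℝ) ∈ S := by
    refine ⟨le_refl 0, fun δ₀ hδ₀ => ⟨1, one_pos, fun x hx δ ρ hρ hρδ hδδ₀ => ?_⟩⟩
    rw [Real.rpow_zero, mul_one, ENNReal.ofReal_one]
    exact one_le_coverNumber ⟨x, Metric.mem_closedBall_self (by linarith), hx⟩
  have hub : ∀ s ∈ S, s ≤ 0 := by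
    intro s hs
    by_contra hcon
    push_neg at hcon
    obtain ⟨C, hC, h⟩ := hs.2 (1/4) (by norm_num)
    set R := max 2 ((2/C) ^ s⁻¹) with hR
    have hR2 : (2:ℝ) ≤ R := le_max_left _ _
    have hR0 : (0:ℝ) < R := by linarith
    set ρ := (1/4) / R with hρdef
    have hρ0 : 0 < ρ := by positivity
    have hρlt : ρ < 1/4 := by
      rw [hρdef, div_lt_iff₀ hR0]
      nlinarith
    have hkey := h 1 one_mem (1/4) ρ hρ0 hρlt le_rfl
    have hdiv : (1/4 : ℝ) / ρ = R := by
      rw [hρdef]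
      field_simp
    rw [hdiv] at hkey
    have hRs : 2 / C ≤ R ^ s := by
      have h1 : ((2/C) ^ s⁻¹ : ℝ) ≤ R := le_max_right _ _
      have h2 : ((2/C) ^ s⁻¹ : ℝ) ^ s ≤ R ^ s :=
        Real.rpow_le_rpow (Real.rpow_nonneg (by positivity) _) h1 hcon.le
      rwa [Real.rpow_inv_rpow (by positivity) hcon.ne'] at h2
    have hCRs : 2 ≤ C * R ^ s := by
      rw [div_le_iff₀ hC] at hRs
      linarith [mul_comm C (R ^ s) ▸ hRs]
    have hup : coverNumber (closedBall (1:ℝ) (1/4) ∩ Eset) ρ ≤ 1 := by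
      rw [ball_one_inter (by norm_num) le_rfl]
      exact coverNumber_singleton_le hρ0.le
    have : ENNReal.ofReal (C * R ^ s) ≤ 1 := le_trans hkey hup
    rw [ENNReal.ofReal_le_one] at this
    linarith
  exact le_antisymm (csSup_le ⟨0, h0mem⟩ hub) (le_csSup ⟨0, hub⟩ h0mem)

lemma not_eh : ¬ EquiHomogeneous Eset := by
  intro h
  obtain ⟨M, c₁, c₂, hM, hc₁, hc₂, hineq⟩ := h 1 one_pos
  have hmin : 0 < min 1 (1/(4*c₁)) := by
    apply lt_min one_pos
    positivity
  obtain ⟨n₀', hn₀'⟩ := exists_P_lt hmin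
  set n₀ := n₀' + 1 with hn₀
  have hP0 : P n₀ < min 1 (1/(4*c₁)) :=
    lt_of_le_of_lt (P_anti.antitone (by omega)) hn₀'
  set δ := P n₀ with hδ
  set K := ⌊M⌋₊ + 1 with hK
  set ρ := P (n₀ + K + 2) with hρdef
  have hρ0 : 0 < ρ := P_pos _
  have hρδ : ρ < δ := P_anti (by omega)
  have hδ1 : δ ≤ 1 := le_of_lt (lt_of_lt_of_le hP0 (min_le_left _ _))
  have key := hineq δ ρ hρ0 hρδ hδ1
  set S : Finset ℝ := (Finset.range K).image (fun i => P (n₀ + i)) with hS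
  have hcardS : S.card = K := by
    rw [hS, Finset.card_image_of_injOn, Finset.card_range]
    intro i _ j _ hij
    have := P_anti.injective hij
    omega
  have hSsub : (S : Set ℝ) ⊆ closedBall 0 δ ∩ Eset := by
    intro y hy
    simp only [hS, Finset.coe_image, Set.mem_image, Finset.coe_range, Set.mem_Iio] at hy
    obtain ⟨i, hi, rfl⟩ := hy
    constructor
    · rw [Metric.mem_closedBall, Real.dist_eq, sub_zero, abs_of_pos (P_pos _)]
      exact P_anti.antitone (by omega)
    · exact P_mem (by omega)
  have haux : ∀ i j : ℕ, i < j → j < K → 2 * ρ < P (n₀ + i) - P (n₀ + j) := by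
    intro i j hij hjK
    have h1 : P (n₀ + j) ≤ P (n₀ + i + 1) := P_anti.antitone (by omega)
    have h2 : P (n₀ + i) - P (n₀ + i + 1) = P (n₀ + i + 1) := by
      rw [P_succ]; ring
    have h3 : P (n₀ + K) ≤ P (n₀ + i + 1) := P_anti.antitone (by omega)
    have h4 : 2 * ρ < P (n₀ + K) := by
      rw [hρdef]
      have e1 : P (n₀ + K + 2) = P (n₀ + K) / 2 / 2 := by
        rw [show n₀ + K + 2 = (n₀ + K + 1) + 1 by omega, P_succ, P_succ]
      rw [e1]
      have := P_pos (n₀ + K)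
      linarith
    linarith
  have hsep : ∀ a ∈ S, ∀ b ∈ S, a ≠ b → 2 * ρ < dist a b := by
    intro a ha b hb hab
    simp only [hS, Finset.mem_image, Finset.mem_range] at ha hb
    obtain ⟨i, hi, rfl⟩ := ha
    obtain ⟨j, hj, rfl⟩ := hb
    have hij : i ≠ j := fun h => hab (by rw [h])
    rcases lt_or_gt_of_ne hij with h | h
    · rw [Real.dist_eq, abs_of_pos (by linarith [haux i j h hj, hρ0] : (0:ℝ) < P (n₀+i) - P (n₀+j))]
      exact haux i j h hj
    · rw [Real.dist_eq, abs_sub_comm,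
        abs_of_pos (by linarith [haux j i h hi, hρ0] : (0:ℝ) < P (n₀+j) - P (n₀+i))]
      exact haux j i h hi
  have hLHS : (K : ℝ≥0∞) ≤ ⨆ x ∈ Eset, coverNumber (closedBall x δ ∩ Eset) ρ := by
    have h1 : (K : ℝ≥0∞) ≤ coverNumber (closedBall 0 δ ∩ Eset) ρ := by
      rw [← hcardS]
      exact le_coverNumber_of_separated S hSsub hsep
    exact le_trans h1 (le_iSup₂ (f := fun x (_ : x ∈ Eset) => coverNumber (closedBall x δ ∩ Eset) ρ) 0 zero_mem)
  have hRHS : (⨅ x ∈ Eset, coverNumber (closedBall x (c₁ * δ) ∩ Eset) (c₂ * ρ)) ≤ 1 := by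
    refine le_trans (iInf₂_le 1 one_mem) ?_
    have hr1 : c₁ * δ ≤ 1/4 := by
      have h2 : δ < 1/(4*c₁) := lt_of_lt_of_le hP0 (min_le_right _ _)
      rw [lt_div_iff₀ (by positivity)] at h2
      nlinarith
    rw [ball_one_inter (mul_nonneg hc₁.le (P_pos _).le) hr1]
    exact coverNumber_singleton_le (mul_nonneg hc₂.le hρ0.le)
  have hfin : (K : ℝ≥0∞) ≤ ENNReal.ofReal M := by
    calc (K : ℝ≥0∞) ≤ ⨆ x ∈ Eset, coverNumber (closedBall x δ ∩ Eset) ρ := hLHS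
      _ ≤ ENNReal.ofReal M * (⨅ x ∈ Eset, coverNumber (closedBall x (c₁ * δ) ∩ Eset) (c₂ * ρ)) := key
      _ ≤ ENNReal.ofReal M * 1 := mul_le_mul_right hRHS _
      _ = ENNReal.ofReal M := mul_one _
  have hKM : (K : ℝ) ≤ M := by
    rw [← ENNReal.ofReal_natCast] at hfin
    exact (ENNReal.ofReal_le_ofReal_iff (by linarith)).mp hfin
  have : M < K := by
    rw [hK]
    push_cast
    exact Nat.lt_floor_add_one M
  linarith

end EH16

/-- The set `F = {0,1} ∪ {2^{-n} : n ∈ ℕ}` satisfies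
`dim_A F = dim_LA F = 0` but is not equi-homogeneous. -/
theorem equal_dims_not_equiHomogeneous (F : Set ℝ)
    (hF : F = insert (0 : ℝ)
      (insert 1 {x : ℝ | ∃ n : ℕ, 1 ≤ n ∧ x = (2 : ℝ) ^ (-(n : ℝ))})) :
    assouadDim F = 0 ∧ lowerAssouadDim F = 0 ∧ ¬ EquiHomogeneous F := by
  have hE : F = EH16.Eset := hF
  rw [hE]
  exact ⟨EH16.assouad_zero, EH16.lower_zero, EH16.not_eh⟩
end

section
/- If a non-autonomous iterated function system of similarities satisfies the generalised Moran open-set condition and inf{σ_i : i ∈ ℕ} = σ* > 0, then there is a constant κ₀ (one may take κ₀ = λ(B_1(0))·(2η/σ*)^d / ε₀), independent of k, δ and x, such that for every k ∈ ℕ₀, every δ with 0 < δ ≤ η, and every x ∈ ℝ^d, the set A^k_δ = {α ∈ J^k_δ : f_α(closure(U^{n_α})) ∩ B_δ(x) ≠ ∅} has cardinality at most κ₀. -/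
open Set Metric Filter Bornology MeasureTheory
open scoped ENNReal NNReal

/-- A non-autonomous iterated function system: contractions `f i` with ratios
`σ i ∈ (0,1)` and finite nonempty index sets `I k ⊆ ℕ` for `k ≥ 1`. -/
structure NAIFS (E : Type*) [MetricSpace E] where
  f : ℕ → E → E
  σ : ℕ → ℝ
  σ_pos : ∀ i, 0 < σ i
  σ_lt_one : ∀ i, σ i < 1
  contract : ∀ i x y, dist (f i x) (f i y) ≤ σ i * dist x y
  I : ℕ → Finset ℕ
  I_nonempty : ∀ k, 1 ≤ k → (I k).Nonempty

variable {E : Type*} [MetricSpace E]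

/-- `S^k(B) = ⋃_{i ∈ I_{k+1}} f_i(B)`. -/
def Sstep (sys : NAIFS E) (k : ℕ) (B : Set E) : Set E :=
  ⋃ i ∈ sys.I (k + 1), sys.f i '' B

/-- `SiterN sys k n B = S^{k, k+n}(B) = S^k ∘ ⋯ ∘ S^{k+n-1} (B)`. -/
def SiterN (sys : NAIFS E) : ℕ → ℕ → Set E → Set E
  | _, 0, B => B
  | k, n + 1, B => Sstep sys k (SiterN sys (k + 1) n B)

/-- Hausdorff semi-distance `ρ_H(A,B) = sup_{x ∈ A} inf_{y ∈ B} d(x,y)`. -/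
noncomputable def semidist (A B : Set E) : ℝ≥0∞ :=
  ⨆ x ∈ A, EMetric.infEdist x B

/-- `{F^k}` is a pullback attractor: each `F^k` compact, uniformly bounded,
invariant `F^k = S^k(F^{k+1})`, and `ρ_H(S^{k,l}(B), F^k) → 0` as `l → ∞`
for every bounded `B`. -/
def IsPullbackAttractor (sys : NAIFS E) (F : ℕ → Set E) : Prop :=
  (∀ k, IsCompact (F k)) ∧
  IsBounded (⋃ k, F k) ∧
  (∀ k, F k = Sstep sys k (F (k + 1))) ∧
  (∀ B : Set E, IsBounded B → ∀ k,
    Tendsto (fun l => semidist (SiterN sys k (l - k) B) (F k)) atTop (nhds 0))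

/-- The generalised Moran open-set condition: uniformly bounded nonempty open
sets `U^k` with `S^k(U^{k+1}) ⊆ U^k`, `f_i(U^k) ∩ f_j(U^k) = ∅` for distinct
`i, j ∈ I_k`, and `λ(U^k) ≥ ε₀ > 0`. -/
def GenMoranOSC {d : ℕ} (sys : NAIFS (EuclideanSpace ℝ (Fin d)))
    (U : ℕ → Set (EuclideanSpace ℝ (Fin d))) (ε₀ : ℝ) : Prop :=
  (∀ k, (U k).Nonempty) ∧
  (∀ k, IsOpen (U k)) ∧
  IsBounded (⋃ k, U k) ∧
  (∀ k, Sstep sys k (U (k + 1)) ⊆ U k) ∧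
  (∀ k, 1 ≤ k → ∀ i ∈ sys.I k, ∀ j ∈ sys.I k, i ≠ j →
    sys.f i '' U k ∩ sys.f j '' U k = ∅) ∧
  0 < ε₀ ∧
  (∀ k, ENNReal.ofReal ε₀ ≤ volume (U k))

/-- `wordSet sys k n` is `J^{k,k+n} = I_{k+1} × ⋯ × I_{k+n}`, as a finite set
of words (lists). -/
def wordSet (sys : NAIFS E) : ℕ → ℕ → Finset (List ℕ)
  | _, 0 => {([] : List ℕ)}
  | k, n + 1 => Finset.image (fun p : ℕ × List ℕ => p.1 :: p.2)
      (sys.I (k + 1) ×ˢ wordSet sys (k + 1) n)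

/-- `σ_α = σ_{i_1} ⋯ σ_{i_n}` for a word `α = (i_1, …, i_n)`. -/
noncomputable def sigmaWord (sys : NAIFS E) (α : List ℕ) : ℝ :=
  (α.map sys.σ).prod

/-- `f_α = f_{i_1} ∘ ⋯ ∘ f_{i_n}` for a word `α = (i_1, …, i_n)`. -/
def mapWord (sys : NAIFS E) (α : List ℕ) : E → E :=
  α.foldr (fun i g => sys.f i ∘ g) id

/-- `J^k_δ = {α ∈ J^k : σ_α η < δ ≤ σ_{α'} η}`, where `α'` is the truncation
of `α` (with `σ_{α'} = 1` when `α` has length 1). -/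
def Jset (sys : NAIFS E) (η : ℝ) (k : ℕ) (δ : ℝ) : Set (List ℕ) :=
  {α | (∃ n : ℕ, 1 ≤ n ∧ α ∈ wordSet sys k n) ∧
    sigmaWord sys α * η < δ ∧ δ ≤ sigmaWord sys α.dropLast * η}

open scoped Pointwise

section AuxLemmas

variable {E : Type*} [MetricSpace E]

lemma sigmaWord_nil (sys : NAIFS E) : sigmaWord sys [] = 1 := by simp [sigmaWord]

lemma sigmaWord_cons (sys : NAIFS E) (i : ℕ) (α : List ℕ) :
    sigmaWord sys (i :: α) = sys.σ i * sigmaWord sys α := by simp [sigmaWord]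

lemma sigmaWord_append (sys : NAIFS E) (α β : List ℕ) :
    sigmaWord sys (α ++ β) = sigmaWord sys α * sigmaWord sys β := by
  simp [sigmaWord]

lemma sigmaWord_pos (sys : NAIFS E) (α : List ℕ) : 0 < sigmaWord sys α := by
  induction α with
  | nil => simp [sigmaWord]
  | cons i β ih => rw [sigmaWord_cons]; exact mul_pos (sys.σ_pos i) ih

lemma sigmaWord_le_one (sys : NAIFS E) (α : List ℕ) : sigmaWord sys α ≤ 1 := by
  induction α with
  | nil => simp [sigmaWord]
  | cons i β ih =>
    rw [sigmaWord_cons]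
    exact mul_le_one₀ (sys.σ_lt_one i).le (sigmaWord_pos sys β).le ih

lemma mapWord_cons (sys : NAIFS E) (i : ℕ) (α : List ℕ) :
    mapWord sys (i :: α) = sys.f i ∘ mapWord sys α := rfl

lemma mapWord_dist (sys : NAIFS E)
    (hsim : ∀ i x y, dist (sys.f i x) (sys.f i y) = sys.σ i * dist x y)
    (α : List ℕ) (x y : E) :
    dist (mapWord sys α x) (mapWord sys α y) = sigmaWord sys α * dist x y := by
  induction α with
  | nil => simp [mapWord, sigmaWord]
  | cons i β ih =>
    rw [mapWord_cons, sigmaWord_cons]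
    simp only [Function.comp_apply]
    rw [hsim, ih, mul_assoc]

lemma mem_wordSet_succ {sys : NAIFS E} {k n : ℕ} {α : List ℕ} :
    α ∈ wordSet sys k (n + 1) ↔
      ∃ i β, i ∈ sys.I (k + 1) ∧ β ∈ wordSet sys (k + 1) n ∧ α = i :: β := by
  simp only [wordSet, Finset.mem_image, Finset.mem_product, Prod.exists]
  constructor
  · rintro ⟨i, β, ⟨hi, hβ⟩, rfl⟩; exact ⟨i, β, hi, hβ, rfl⟩
  · rintro ⟨i, β, hi, hβ, rfl⟩; exact ⟨i, β, ⟨hi, hβ⟩, rfl⟩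

lemma length_of_mem_wordSet {sys : NAIFS E} :
    ∀ {n k : ℕ} {α : List ℕ}, α ∈ wordSet sys k n → α.length = n := by
  intro n
  induction n with
  | zero => intro k α h; simp [wordSet] at h; simp [h]
  | succ n ih =>
    intro k α h
    obtain ⟨i, β, _, hβ, rfl⟩ := mem_wordSet_succ.1 h
    simp [ih hβ]

lemma mapWord_image_subset (sys : NAIFS E) (U : ℕ → Set E)
    (hinv : ∀ k, Sstep sys k (U (k + 1)) ⊆ U k) :
    ∀ (n k : ℕ) (α : List ℕ), α ∈ wordSet sys k n →
      mapWord sys α '' U (k + n) ⊆ U k := by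
  intro n
  induction n with
  | zero =>
    intro k α h
    simp [wordSet] at h
    subst h
    simp [mapWord]
  | succ n ih =>
    intro k α h
    obtain ⟨i, β, hi, hβ, rfl⟩ := mem_wordSet_succ.1 h
    rw [mapWord_cons, Set.image_comp]
    have h1 : mapWord sys β '' U (k + (n + 1)) ⊆ U (k + 1) := by
      have := ih (k + 1) β hβ
      rwa [show k + 1 + n = k + (n + 1) by omega] at this
    refine (Set.image_mono h1).trans (le_trans ?_ (hinv k))
    intro y hy
    exact Set.mem_biUnion hi hy

lemma mapWord_image_disjoint (sys : NAIFS E) (U : ℕ → Set E)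
    (hinv : ∀ k, Sstep sys k (U (k + 1)) ⊆ U k)
    (hinj : ∀ i, Function.Injective (sys.f i))
    (hdisj : ∀ k, 1 ≤ k → ∀ i ∈ sys.I k, ∀ j ∈ sys.I k, i ≠ j →
      sys.f i '' U k ∩ sys.f j '' U k = ∅) :
    ∀ (n m k : ℕ) (α β : List ℕ), α ∈ wordSet sys k n → β ∈ wordSet sys k m →
      ¬ α <+: β → ¬ β <+: α →
      Disjoint (mapWord sys α '' U (k + n)) (mapWord sys β '' U (k + m)) := by
  intro n
  induction n with
  | zero =>
    intro m k α β hα _ hab _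
    simp [wordSet] at hα
    subst hα
    exact absurd List.nil_prefix hab
  | succ n ih =>
    intro m k α β hα hβ hab hba
    obtain ⟨i, α₁, hi, hα₁, rfl⟩ := mem_wordSet_succ.1 hα
    cases m with
    | zero =>
      simp [wordSet] at hβ
      subst hβ
      exact absurd List.nil_prefix hba
    | succ m =>
      obtain ⟨j, β₁, hj, hβ₁, rfl⟩ := mem_wordSet_succ.1 hβ
      by_cases hij : i = j
      · subst hij
        rw [mapWord_cons, Set.image_comp, mapWord_cons, Set.image_comp]
        apply Set.disjoint_image_of_injective (hinj i)
        rw [List.cons_prefix_cons] at hab hba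
        have h1 := ih m (k + 1) α₁ β₁ hα₁ hβ₁
          (fun h => hab ⟨rfl, h⟩) (fun h => hba ⟨rfl, h⟩)
        rwa [show k + 1 + n = k + (n + 1) by omega,
          show k + 1 + m = k + (m + 1) by omega] at h1
      · have s1 : mapWord sys (i :: α₁) '' U (k + (n + 1)) ⊆ sys.f i '' U (k + 1) := by
          rw [mapWord_cons, Set.image_comp]
          apply Set.image_mono
          have := mapWord_image_subset sys U hinv n (k + 1) α₁ hα₁
          rwa [show k + 1 + n = k + (n + 1) by omega] at this
        have s2 : mapWord sys (j :: β₁) '' U (k + (m + 1)) ⊆ sys.f j '' U (k + 1) := by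
          rw [mapWord_cons, Set.image_comp]
          apply Set.image_mono
          have := mapWord_image_subset sys U hinv m (k + 1) β₁ hβ₁
          rwa [show k + 1 + m = k + (m + 1) by omega] at this
        have hd := hdisj (k + 1) (Nat.le_add_left 1 k) i hi j hj hij
        exact (Set.disjoint_iff_inter_eq_empty.2 hd).mono s1 s2

/-- A similarity of Euclidean space with positive ratio is an open map and
scales volume by `c ^ d`. -/
lemma similarity_props {d : ℕ} (f : EuclideanSpace ℝ (Fin d) → EuclideanSpace ℝ (Fin d))
    (c : ℝ) (hc : 0 < c) (hf : ∀ x y, dist (f x) (f y) = c * dist x y) :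
    IsOpenMap f ∧ ∀ s, volume (f '' s) = ENNReal.ofReal (c ^ d) * volume s := by
  set g : EuclideanSpace ℝ (Fin d) → EuclideanSpace ℝ (Fin d) := fun x => c⁻¹ • f x with hg
  have hgiso : Isometry g := Isometry.of_dist_eq (fun x y => by
    simp only [hg]
    rw [dist_smul₀, hf, Real.norm_eq_abs, abs_inv, abs_of_pos hc]
    field_simp)
  set A := hgiso.affineIsometryOfStrictConvexSpace with hA
  set Leq := A.linearIsometry.toLinearIsometryEquiv rfl with hLeq
  have hgx : ∀ x, g x = Leq x + g 0 := by
    intro x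
    have h1 : g x = A (x +ᵥ (0 : EuclideanSpace ℝ (Fin d))) := by simp [hA]
    rw [A.map_vadd] at h1
    have h0 : A 0 = g 0 := by simp [hA]
    rw [h0] at h1
    simpa [hLeq] using h1
  have hfx : ∀ x, f x = c • (Leq x + g 0) := by
    intro x
    rw [← hgx, hg]
    simp [smul_inv_smul₀ hc.ne']
  have himg : ∀ s : Set (EuclideanSpace ℝ (Fin d)),
      f '' s = c • ((fun y => y + g 0) '' (⇑Leq '' s)) := by
    intro s
    rw [← Set.image_smul, ← Set.image_comp, ← Set.image_comp]
    exact Set.image_congr fun x _ => (hfx x)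
  have hLvol : ∀ s : Set (EuclideanSpace ℝ (Fin d)), volume (⇑Leq '' s) = volume s := by
    intro s
    set me : (EuclideanSpace ℝ (Fin d)) ≃ᵐ (EuclideanSpace ℝ (Fin d)) :=
      Leq.toHomeomorph.toMeasurableEquiv with hme
    have hcoe : ⇑me = ⇑Leq := rfl
    have hcoes : ⇑me.symm = ⇑Leq.symm := rfl
    have h1 : ⇑Leq '' s = ⇑me.symm ⁻¹' s := by
      rw [← hcoe]; exact me.image_eq_preimage_symm s
    have h3 : Measure.map (⇑me.symm) volume = volume := by
      rw [hcoes]; exact Leq.symm.measurePreserving.map_eq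
    rw [h1, ← me.symm.map_apply s, h3]
  have htrans : ∀ (b : EuclideanSpace ℝ (Fin d)) (s : Set (EuclideanSpace ℝ (Fin d))),
      volume ((fun y => y + b) '' s) = volume s := by
    intro b s
    have : (fun y => y + b) '' s = (fun y => y + (-b)) ⁻¹' s := by
      ext y
      simp only [Set.mem_image, Set.mem_preimage]
      constructor
      · rintro ⟨z, hz, rfl⟩; simpa using hz
      · intro h; exact ⟨y + (-b), h, by abel⟩
    rw [this, measure_preimage_add_right]
  constructor
  · intro O hO
    rw [himg]
    have h1 : IsOpen (⇑Leq '' O) := Leq.toHomeomorph.isOpenMap _ hO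
    have h2 : IsOpen ((fun y => y + g 0) '' (⇑Leq '' O)) :=
      (Homeomorph.addRight (g 0)).isOpenMap _ h1
    exact h2.smul₀ hc.ne'
  · intro s
    rw [himg, Measure.addHaar_smul_of_nonneg volume hc.le, htrans, hLvol,
      finrank_euclideanSpace_fin]

end AuxLemmas
/-- For a non-autonomous IFS of similarities satisfying the
generalised Moran open-set condition with `inf{σ_i} = σ* > 0`, the set
`A^k_δ = {α ∈ J^k_δ : f_α(closure U^{n_α}) ∩ B_δ(x) ≠ ∅}` has cardinality at
most `κ₀ = λ(B_1(0)) (2η/σ*)^d / ε₀`, uniformly in `k`, `δ` and `x`. -/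
theorem card_A_delta_le {d : ℕ}
    (sys : NAIFS (EuclideanSpace ℝ (Fin d)))
    (hsim : ∀ i x y, dist (sys.f i x) (sys.f i y) = sys.σ i * dist x y)
    (U : ℕ → Set (EuclideanSpace ℝ (Fin d))) (ε₀ : ℝ)
    (hosc : GenMoranOSC sys U ε₀)
    (σstar : ℝ) (hσstar : σstar = sInf (Set.range sys.σ)) (hσpos : 0 < σstar)
    (η : ℝ) (hη : η = ⨆ k, diam (closure (U k))) :
    ∀ (k : ℕ) (δ : ℝ), 0 < δ → δ ≤ η → ∀ x : EuclideanSpace ℝ (Fin d),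
      {α ∈ Jset sys η k δ |
        (mapWord sys α '' closure (U (k + α.length)) ∩ closedBall x δ).Nonempty}.Finite ∧
      (({α ∈ Jset sys η k δ |
        (mapWord sys α '' closure (U (k + α.length)) ∩ closedBall x δ).Nonempty}.ncard : ℝ) ≤
        (volume (closedBall (0 : EuclideanSpace ℝ (Fin d)) 1)).toReal *
          (2 * η / σstar) ^ d / ε₀) := by
  obtain ⟨hne, hopen, hbU, hinv, hdisjM, hε₀, hvolU⟩ := hosc
  intro k δ hδ hδη x
  have hη0 : 0 < η := lt_of_lt_of_le hδ hδη
  -- uniform diameter bound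
  have hdiam : ∀ m, diam (closure (U m)) ≤ η := by
    intro m
    rw [hη]
    refine le_ciSup (f := fun k => diam (closure (U k))) ⟨diam (closure (⋃ k, U k)), ?_⟩ m
    rintro r ⟨m', rfl⟩
    exact diam_mono (closure_mono (Set.subset_iUnion U m')) hbU.closure
  have hUbd : ∀ m, IsBounded (closure (U m)) :=
    fun m => (hbU.subset (Set.subset_iUnion U m)).closure
  -- injectivity of the maps
  have hinj : ∀ i, Function.Injective (sys.f i) := by
    intro i a b hab
    have : dist (sys.f i a) (sys.f i b) = 0 := by rw [hab, dist_self]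
    rw [hsim] at this
    have := (mul_eq_zero.1 this).resolve_left (sys.σ_pos i).ne'
    exact dist_eq_zero.1 this
  set A := {α ∈ Jset sys η k δ |
    (mapWord sys α '' closure (U (k + α.length)) ∩ closedBall x δ).Nonempty} with hAdef
  -- basic facts about members of `Jset`
  have hJ : ∀ α ∈ Jset sys η k δ, α ∈ wordSet sys k α.length ∧ 1 ≤ α.length ∧
      σstar * (δ / η) ≤ sigmaWord sys α := by
    rintro α ⟨⟨n, hn1, hn2⟩, hlt, hle⟩
    have hlen : α.length = n := length_of_mem_wordSet hn2
    subst hlen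
    refine ⟨hn2, hn1, ?_⟩
    have hαne : α ≠ [] := by
      intro h; rw [h] at hn1; simp at hn1
    have hdec : α.dropLast ++ [α.getLast hαne] = α := List.dropLast_append_getLast hαne
    have hσα : sigmaWord sys α
        = sigmaWord sys α.dropLast * sys.σ (α.getLast hαne) := by
      conv_lhs => rw [← hdec]
      rw [sigmaWord_append, sigmaWord_cons, sigmaWord_nil]
      ring
    have h1 : δ / η ≤ sigmaWord sys α.dropLast := by
      rw [div_le_iff₀ hη0]; exact hle
    have h2 : σstar ≤ sys.σ (α.getLast hαne) := by
      rw [hσstar]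
      exact csInf_le ⟨0, by rintro r ⟨i, rfl⟩; exact (sys.σ_pos i).le⟩
        ⟨α.getLast hαne, rfl⟩
    calc σstar * (δ / η) = (δ / η) * σstar := by ring
      _ ≤ sigmaWord sys α.dropLast * sys.σ (α.getLast hαne) :=
        mul_le_mul h1 h2 hσpos.le (sigmaWord_pos sys _).le
      _ = sigmaWord sys α := hσα.symm
  -- prefix-freeness inside Jset
  have hprefree : ∀ α ∈ Jset sys η k δ, ∀ β ∈ Jset sys η k δ, α ≠ β → ¬ α <+: β := by
    rintro α ⟨_, hαlt, _⟩ β ⟨_, _, hβle⟩ hne' ⟨t, rfl⟩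
    have ht : t ≠ [] := by rintro rfl; simp at hne'
    rw [List.dropLast_append_of_ne_nil ht, sigmaWord_append] at hβle
    have h1 : sigmaWord sys α * sigmaWord sys t.dropLast ≤ sigmaWord sys α :=
      mul_le_of_le_one_right (sigmaWord_pos sys α).le (sigmaWord_le_one sys _)
    have h2 := mul_le_mul_of_nonneg_right h1 hη0.le
    linarith
  -- each image set lies in the ball of radius 2δ
  have hball : ∀ α ∈ A, mapWord sys α '' U (k + α.length) ⊆ closedBall x (2 * δ) := by
    rintro α ⟨hJα, z, hz1, hz2⟩ y hy
    obtain ⟨⟨n, hn1, hn2⟩, hlt, _⟩ := hJα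
    have hy' : y ∈ mapWord sys α '' closure (U (k + α.length)) :=
      Set.image_mono subset_closure hy
    obtain ⟨a, ha, rfl⟩ := hy'
    obtain ⟨b, hb, rfl⟩ := hz1
    have hd1 : dist (mapWord sys α a) (mapWord sys α b) ≤ sigmaWord sys α * η := by
      rw [mapWord_dist sys hsim]
      exact mul_le_mul_of_nonneg_left
        ((dist_le_diam_of_mem (hUbd _) ha hb).trans (hdiam _))
        (sigmaWord_pos sys α).le
    have hd2 : dist (mapWord sys α b) x ≤ δ := mem_closedBall.1 hz2
    have : dist (mapWord sys α a) x ≤ 2 * δ := by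
      calc dist (mapWord sys α a) x
          ≤ dist (mapWord sys α a) (mapWord sys α b) + dist (mapWord sys α b) x :=
            dist_triangle _ _ _
        _ ≤ sigmaWord sys α * η + δ := add_le_add hd1 hd2
        _ ≤ 2 * δ := by linarith
    exact mem_closedBall.2 this
  -- pairwise disjointness of the open images
  have hpair : A.PairwiseDisjoint (fun α => mapWord sys α '' U (k + α.length)) := by
    intro α hα β hβ hne'
    have hα' := (hJ α hα.1)
    have hβ' := (hJ β hβ.1)
    exact mapWord_image_disjoint sys U hinv hinj hdisjM α.length β.length k α β
      hα'.1 hβ'.1 (hprefree α hα.1 β hβ.1 hne')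
      (hprefree β hβ.1 α hα.1 (Ne.symm hne'))
  -- uniform lower volume bound
  set c : ℝ≥0∞ := ENNReal.ofReal ((σstar * (δ / η)) ^ d * ε₀) with hcdef
  have hp0 : (0 : ℝ) < (σstar * (δ / η)) ^ d :=
    pow_pos (mul_pos hσpos (div_pos hδ hη0)) d
  have hc0 : 0 < c := ENNReal.ofReal_pos.2 (mul_pos hp0 hε₀)
  have hvolα : ∀ α ∈ Jset sys η k δ, c ≤ volume (mapWord sys α '' U (k + α.length)) := by
    intro α hα
    obtain ⟨hw, hl, hσb⟩ := hJ α hα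
    have hprops := similarity_props (mapWord sys α) (sigmaWord sys α)
      (sigmaWord_pos sys α) (mapWord_dist sys hsim α)
    have hσnn : (0 : ℝ) ≤ sigmaWord sys α := (sigmaWord_pos sys α).le
    calc c ≤ ENNReal.ofReal (sigmaWord sys α ^ d * ε₀) := by
          apply ENNReal.ofReal_le_ofReal
          exact mul_le_mul_of_nonneg_right
            (pow_le_pow_left₀ (mul_pos hσpos (div_pos hδ hη0)).le hσb d) hε₀.le
      _ = ENNReal.ofReal (sigmaWord sys α ^ d) * ENNReal.ofReal ε₀ :=
          ENNReal.ofReal_mul (pow_nonneg hσnn d)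
      _ ≤ ENNReal.ofReal (sigmaWord sys α ^ d) * volume (U (k + α.length)) := by
          exact mul_le_mul_right (hvolU _) _
      _ = volume (mapWord sys α '' U (k + α.length)) := (hprops.2 _).symm
  -- openness ⇒ measurability
  have hmeas : ∀ α ∈ Jset sys η k δ, MeasurableSet (mapWord sys α '' U (k + α.length)) := by
    intro α hα
    have hprops := similarity_props (mapWord sys α) (sigmaWord sys α)
      (sigmaWord_pos sys α) (mapWord_dist sys hsim α)
    exact (hprops.1 _ (hopen _)).measurableSet
  -- key counting estimate
  have key : ∀ F : Finset (List ℕ), ↑F ⊆ A →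
      (F.card : ℝ≥0∞) * c ≤ volume (closedBall x (2 * δ)) := by
    intro F hF
    calc (F.card : ℝ≥0∞) * c = ∑ _α ∈ F, c := by
          rw [Finset.sum_const, nsmul_eq_mul]
      _ ≤ ∑ α ∈ F, volume (mapWord sys α '' U (k + α.length)) :=
          Finset.sum_le_sum fun α hα => hvolα α (hF hα).1
      _ = volume (⋃ α ∈ F, mapWord sys α '' U (k + α.length)) :=
          (measure_biUnion_finset (hpair.subset hF) fun α hα => hmeas α (hF hα).1).symm
      _ ≤ volume (closedBall x (2 * δ)) :=
          measure_mono (Set.iUnion₂_subset fun α hα => hball α (hF hα))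
  have hT : volume (closedBall x (2 * δ))
      = ENNReal.ofReal ((2 * δ) ^ d) * volume (closedBall (0 : EuclideanSpace ℝ (Fin d)) 1) := by
    rw [Measure.addHaar_closedBall' volume x (by positivity), finrank_euclideanSpace_fin]
  have hTfin : volume (closedBall x (2 * δ)) ≠ ⊤ := measure_closedBall_lt_top.ne
  -- finiteness
  have hfin : A.Finite := by
    by_contra hinf
    have hinf' : A.Infinite := hinf
    obtain ⟨n, hn⟩ := ENNReal.exists_nat_gt
      (ENNReal.div_lt_top hTfin hc0.ne').ne
    obtain ⟨F, hFsub, hFcard⟩ := hinf'.exists_subset_card_eq n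
    have h1 := key F hFsub
    rw [hFcard] at h1
    have h2 : (n : ℝ≥0∞) ≤ volume (closedBall x (2 * δ)) / c :=
      (ENNReal.le_div_iff_mul_le (Or.inl hc0.ne') (Or.inl ENNReal.ofReal_ne_top)).2 h1
    exact absurd h2 (not_le.2 hn)
  refine ⟨hfin, ?_⟩
  have hcard := key hfin.toFinset (by simp [hfin.coe_toFinset])
  rw [Set.ncard_eq_toFinset_card A hfin]
  set N := hfin.toFinset.card with hN
  set V := volume (closedBall (0 : EuclideanSpace ℝ (Fin d)) 1) with hV
  have hVfin : V ≠ ⊤ := measure_closedBall_lt_top.ne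
  rw [hT] at hcard
  -- pass to real numbers
  have hreal : (N : ℝ) * ((σstar * (δ / η)) ^ d * ε₀) ≤ (2 * δ) ^ d * V.toReal := by
    have h1 := ENNReal.toReal_mono
      (by exact ENNReal.mul_ne_top ENNReal.ofReal_ne_top hVfin) hcard
    rw [ENNReal.toReal_mul, ENNReal.toReal_mul, ENNReal.toReal_natCast,
      ENNReal.toReal_ofReal (by positivity), ENNReal.toReal_ofReal (by positivity)] at h1
    exact h1
  have halg : (2 * δ) ^ d = (2 * η / σstar) ^ d * (σstar * (δ / η)) ^ d := by
    rw [← mul_pow]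
    congr 1
    field_simp
  rw [le_div_iff₀ hε₀]
  have hεnn : (0 : ℝ) ≤ ε₀ := hε₀.le
  calc (N : ℝ) * ε₀ = ((N : ℝ) * ((σstar * (δ / η)) ^ d * ε₀)) / (σstar * (δ / η)) ^ d := by
        field_simp
    _ ≤ ((2 * η / σstar) ^ d * (σstar * (δ / η)) ^ d * V.toReal) / (σstar * (δ / η)) ^ d := by
        apply div_le_div_of_nonneg_right ?_ hp0.le
        · rw [← halg]; exact hreal
    _ = V.toReal * (2 * η / σstar) ^ d := by
        field_simp
end
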